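/- arXiv:2401.02666 — 9 statements merged into one kernel-verified Lean document; each statement's English description precedes it below -/
import Mathlib

section
/- For every instance of the strongly stable matching problem with closures, there exist a subset R ⊆ E and a matching μ in G such that (R1) no stable matching in G contains an edge of R; (R2) μ ⊆ Ch(E \ R); (R3) μ(d) ≠ ∅ for every doctor d ∈ D[E \ R]; (R4) R ∩ block(Ch(E \ R)) = ∅; and (R5) for every doctor d and every pair of edges e ∈ R(d) and f ∈ E(d) \ R, e ≿_d f. -/
open Classical

variable {D H : Type}

def edgesD (E : Set (D × H)) (d : D) : Set (D × H) := {e ∈ E | e.1 = d}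

def edgesH (E : Set (D × H)) (h : H) : Set (D × H) := {e ∈ E | e.2 = h}

def optD (E : Set (D × H)) (d : D) : Set (Option (D × H)) :=
  insert none (some '' edgesD E d)

def optH (E : Set (D × H)) (h : H) : Set (Option (D × H)) :=
  insert none (some '' edgesH E h)

/-- An instance of the strongly stable matching problem with closures:
a bipartite graph between doctors `D` and hospitals `H` with edge set `E`,
a set `S` of closable hospitals, and for each vertex a transitive, total
preference relation on its incident edges together with `∅` (modelled by
`Option`, where `none` plays the role of `∅`), such that every incident
edge is strictly preferred to `∅`. -/
structure SSMC (D H : Type) where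
  E : Set (D × H)
  S : Set H
  prefD : D → Option (D × H) → Option (D × H) → Prop
  prefH : H → Option (D × H) → Option (D × H) → Prop
  prefD_trans : ∀ d, ∀ e ∈ optD E d, ∀ f ∈ optD E d, ∀ g ∈ optD E d,
    prefD d e f → prefD d f g → prefD d e g
  prefD_total : ∀ d, ∀ e ∈ optD E d, ∀ f ∈ optD E d, prefD d e f ∨ prefD d f e
  prefD_none : ∀ d, ∀ e ∈ edgesD E d, prefD d (some e) none ∧ ¬ prefD d none (some e)
  prefH_trans : ∀ h, ∀ e ∈ optH E h, ∀ f ∈ optH E h, ∀ g ∈ optH E h,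
    prefH h e f → prefH h f g → prefH h e g
  prefH_total : ∀ h, ∀ e ∈ optH E h, ∀ f ∈ optH E h, prefH h e f ∨ prefH h f e
  prefH_none : ∀ h, ∀ e ∈ edgesH E h, prefH h (some e) none ∧ ¬ prefH h none (some e)

namespace SSMC

variable (I : SSMC D H)

/-- `e ≻_d f` -/
def strictD (d : D) (e f : Option (D × H)) : Prop := I.prefD d e f ∧ ¬ I.prefD d f e

/-- `e ∼_d f` -/
def simD (d : D) (e f : Option (D × H)) : Prop := I.prefD d e f ∧ I.prefD d f e

/-- `e ≻_h f` -/
def strictH (h : H) (e f : Option (D × H)) : Prop := I.prefH h e f ∧ ¬ I.prefH h f e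

/-- `e ∼_h f` -/
def simH (h : H) (e f : Option (D × H)) : Prop := I.prefH h e f ∧ I.prefH h f e

/-- A matching: a subset of `E` with at most one edge at each vertex. -/
def isMatching (μ : Set (D × H)) : Prop :=
  μ ⊆ I.E ∧ (∀ e ∈ μ, ∀ f ∈ μ, e.1 = f.1 → e = f) ∧
    (∀ e ∈ μ, ∀ f ∈ μ, e.2 = f.2 → e = f)

end SSMC

/-- `μ(d)`: the edge of `μ` at doctor `d` (or `none`). -/
noncomputable def muD (μ : Set (D × H)) (d : D) : Option (D × H) :=
  if h : ∃ e, e ∈ μ ∧ e.1 = d then some h.choose else none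

/-- `μ(h)`: the edge of `μ` at hospital `h` (or `none`). -/
noncomputable def muH (μ : Set (D × H)) (h : H) : Option (D × H) :=
  if hh : ∃ e, e ∈ μ ∧ e.2 = h then some hh.choose else none

namespace SSMC

variable (I : SSMC D H)

/-- `e` blocks the matching `μ`: `e ∈ E \ μ`, `e` weakly blocks `μ` on both of its
endpoints and strongly blocks `μ` on at least one of them (where blocking on a
hospital `h ∈ S` additionally requires `μ(h) ≠ ∅`). -/
def blocks (μ : Set (D × H)) (e : D × H) : Prop :=
  e ∈ I.E ∧ e ∉ μ ∧
  I.prefD e.1 (some e) (muD μ e.1) ∧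
  (I.prefH e.2 (some e) (muH μ e.2) ∧ (e.2 ∈ I.S → muH μ e.2 ≠ none)) ∧
  (I.strictD e.1 (some e) (muD μ e.1) ∨
    (I.strictH e.2 (some e) (muH μ e.2) ∧ (e.2 ∈ I.S → muH μ e.2 ≠ none)))

/-- A stable matching: no edge blocks it. -/
def stable (μ : Set (D × H)) : Prop :=
  I.isMatching μ ∧ ∀ e, ¬ I.blocks μ e

/-- `Ch_D(F)`: union over doctors `d` of the most preferred edges of `F(d)`. -/
def ChD (F : Set (D × H)) : Set (D × H) :=
  {e ∈ F | ∀ f ∈ F, f.1 = e.1 → I.prefD e.1 (some e) (some f)}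

/-- `Ch_H(F)`: union over hospitals `h` of the most preferred edges of `F(h)`. -/
def ChH (F : Set (D × H)) : Set (D × H) :=
  {e ∈ F | ∀ f ∈ F, f.2 = e.2 → I.prefH e.2 (some e) (some f)}

/-- `Ch(F) = Ch_H(Ch_D(F))`. -/
def Ch (F : Set (D × H)) : Set (D × H) := I.ChH (I.ChD F)

/-- `e ≻_d F` for a flat set `F`. -/
def dSucc (F : Set (D × H)) (e : D × H) : Prop :=
  (∀ f ∈ F, f.1 ≠ e.1) ∨ ∃ f ∈ F, f.1 = e.1 ∧ I.strictD e.1 (some e) (some f)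

/-- `e ∼_d F` for a flat set `F`. -/
def dSim (F : Set (D × H)) (e : D × H) : Prop :=
  ∃ f ∈ F, f.1 = e.1 ∧ I.simD e.1 (some e) (some f)

/-- `block(F)` for a flat set `F ⊆ E`. -/
def setBlock (F : Set (D × H)) : Set (D × H) :=
  {e | e ∈ I.E ∧ e ∉ F ∧ (∃ f ∈ F, f.2 = e.2) ∧
    (I.dSucc F e ∨ I.dSim F e) ∧
    (I.dSucc F e → ∃ f ∈ F, f.2 = e.2 ∧ I.prefH e.2 (some e) (some f)) ∧
    (I.dSim F e → ∃ f ∈ F, f.2 = e.2 ∧ I.strictH e.2 (some e) (some f))}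

/-- `L = Ch(E \ R)`. -/
def Lset (R : Set (D × H)) : Set (D × H) := I.Ch (I.E \ R)

/-- The pre-processing conditions (R1)–(R5) on a pair `(R, μ)`. -/
def preproc (R μ : Set (D × H)) : Prop :=
  R ⊆ I.E ∧ I.isMatching μ ∧
  -- (R1)
  (∀ σ, I.stable σ → ∀ e ∈ R, e ∉ σ) ∧
  -- (R2)
  μ ⊆ I.Ch (I.E \ R) ∧
  -- (R3)
  (∀ d : D, (∃ e ∈ I.E \ R, e.1 = d) → ∃ e ∈ μ, e.1 = d) ∧
  -- (R4)
  R ∩ I.setBlock (I.Ch (I.E \ R)) = ∅ ∧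
  -- (R5)
  (∀ d : D, ∀ e ∈ R, e.1 = d → ∀ f ∈ I.E \ R, f.1 = d → I.prefD d (some e) (some f))

/-- `h` is a critical hospital with respect to `(R, μ)`. -/
def critical (R μ : Set (D × H)) (h : H) : Prop :=
  h ∉ I.S ∧ (∀ e ∈ μ, e.2 ≠ h) ∧
  ((∃ e ∈ I.Ch (I.E \ R), e.2 = h) ∨ (∃ e ∈ R, e.2 = h))

/-- Assumption (★): every doctor strictly prefers any acceptable hospital
outside `S` to any acceptable hospital in `S`. -/
def starAssumption : Prop :=
  ∀ (d : D) (h h' : H), (d, h) ∈ I.E → (d, h') ∈ I.E → h ∈ I.S → h' ∉ I.S →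
    I.strictD d (some (d, h')) (some (d, h))

end SSMC

section PreprocessingProof

open Finset

private lemma exists_max_rel {α : Type} (r : α → α → Prop) :
    ∀ s : Finset α, s.Nonempty →
    (∀ a ∈ s, ∀ b ∈ s, r a b ∨ r b a) →
    (∀ a ∈ s, ∀ b ∈ s, ∀ c ∈ s, r a b → r b c → r a c) →
    ∃ a ∈ s, ∀ b ∈ s, r a b := by
  classical
  intro s
  induction s using Finset.induction with
  | empty => intro h; simp at h
  | @insert a s ha ih =>
    intro _ htot htr
    by_cases hs : s.Nonempty
    · obtain ⟨m, hm, hmax⟩ := ih hs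
        (fun x hx y hy => htot x (mem_insert_of_mem hx) y (mem_insert_of_mem hy))
        (fun x hx y hy z hz => htr x (mem_insert_of_mem hx) y (mem_insert_of_mem hy)
          z (mem_insert_of_mem hz))
      rcases htot a (mem_insert_self a s) m (mem_insert_of_mem hm) with h | h
      · refine ⟨a, mem_insert_self a s, ?_⟩
        intro b hb
        rcases mem_insert.mp hb with heq | hb'
        · rw [heq]
          exact (htot a (mem_insert_self a s) a (mem_insert_self a s)).elim id id
        · exact htr a (mem_insert_self a s) m (mem_insert_of_mem hm) b (mem_insert_of_mem hb')
            h (hmax b hb')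
      · refine ⟨m, mem_insert_of_mem hm, ?_⟩
        intro b hb
        rcases mem_insert.mp hb with heq | hb'
        · rw [heq]; exact h
        · exact hmax b hb'
    · obtain rfl : s = ∅ := Finset.not_nonempty_iff_eq_empty.mp hs
      refine ⟨a, mem_insert_self a ∅, ?_⟩
      intro b hb
      rcases mem_insert.mp hb with heq | hb'
      · rw [heq]
        exact (htot a (mem_insert_self a ∅) a (mem_insert_self a ∅)).elim id id
      · simp at hb'

namespace SSMC

variable {D H : Type} (I : SSMC D H)

lemma mem_optD_of {e : D × H} (he : e ∈ I.E) {d : D} (hd : e.1 = d) :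
    some e ∈ optD I.E d :=
  Set.mem_insert_iff.mpr (Or.inr ⟨e, ⟨he, hd⟩, rfl⟩)

lemma mem_optH_of {e : D × H} (he : e ∈ I.E) {h : H} (hh : e.2 = h) :
    some e ∈ optH I.E h :=
  Set.mem_insert_iff.mpr (Or.inr ⟨e, ⟨he, hh⟩, rfl⟩)

lemma chD_subset (F : Set (D × H)) : I.ChD F ⊆ F := fun _ he => he.1

lemma chD_top {F : Set (D × H)} {e : D × H} (he : e ∈ I.ChD F) {x : D × H}
    (hx : x ∈ F) (h1 : x.1 = e.1) : I.prefD e.1 (some e) (some x) := he.2 x hx h1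

lemma chD_nonempty {D' H' : Type} [Fintype D'] [Fintype H'] (I' : SSMC D' H')
    {F : Set (D' × H')} (hFE : F ⊆ I'.E) {d : D'} (hd : ∃ e ∈ F, e.1 = d) :
    ∃ e ∈ I'.ChD F, e.1 = d := by
  classical
  obtain ⟨e0, he0, he0d⟩ := hd
  set s : Finset (D' × H') := (Set.toFinite F).toFinset.filter (fun e => e.1 = d) with hs
  have hmem : ∀ x, x ∈ s ↔ x ∈ F ∧ x.1 = d := by
    intro x; simp [hs, Set.Finite.mem_toFinset]
  obtain ⟨m, hm, hmax⟩ := exists_max_rel (fun x y => I'.prefD d (some x) (some y)) s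
    ⟨e0, (hmem e0).mpr ⟨he0, he0d⟩⟩
    (fun a hax b hbx => I'.prefD_total d _
      (I'.mem_optD_of (hFE ((hmem a).mp hax).1) ((hmem a).mp hax).2) _
      (I'.mem_optD_of (hFE ((hmem b).mp hbx).1) ((hmem b).mp hbx).2))
    (fun a hax b hbx c hcx => I'.prefD_trans d _
      (I'.mem_optD_of (hFE ((hmem a).mp hax).1) ((hmem a).mp hax).2) _
      (I'.mem_optD_of (hFE ((hmem b).mp hbx).1) ((hmem b).mp hbx).2) _
      (I'.mem_optD_of (hFE ((hmem c).mp hcx).1) ((hmem c).mp hcx).2))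
  obtain ⟨hmF, hm1⟩ := (hmem m).mp hm
  refine ⟨m, ⟨hmF, ?_⟩, hm1⟩
  intro f hf hf1
  have := hmax f ((hmem f).mpr ⟨hf, hf1.trans hm1⟩)
  rwa [hm1]

end SSMC

lemma muD_cases {D H : Type} (σ : Set (D × H)) (d : D) :
    muD σ d = none ∨ ∃ g ∈ σ, g.1 = d ∧ muD σ d = some g := by
  by_cases hex : ∃ e, e ∈ σ ∧ e.1 = d
  · exact Or.inr ⟨hex.choose, hex.choose_spec.1, hex.choose_spec.2, dif_pos hex⟩
  · exact Or.inl (dif_neg hex)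

lemma muH_eq_some {D H : Type} {σ : Set (D × H)}
    (hσ : ∀ e ∈ σ, ∀ f ∈ σ, e.2 = f.2 → e = f) {g : D × H} (hg : g ∈ σ) :
    muH σ g.2 = some g := by
  have hex : ∃ e, e ∈ σ ∧ e.2 = g.2 := ⟨g, hg, rfl⟩
  rw [muH, dif_pos hex]
  exact congrArg some (hσ _ hex.choose_spec.1 _ hg hex.choose_spec.2)

end PreprocessingProof



namespace SSMC

variable {D H : Type} (I : SSMC D H)

lemma pref_muD {R σ : Set (D × H)} (hσE : σ ⊆ I.E) (hσR : ∀ g ∈ σ, g ∉ R)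
    {e : D × H} (he : e ∈ I.E)
    (htop : ∀ x ∈ I.E \ R, x.1 = e.1 → I.prefD e.1 (some e) (some x)) :
    I.prefD e.1 (some e) (muD σ e.1) := by
  rcases muD_cases σ e.1 with hmu | ⟨g, hg, hg1, hmu⟩
  · rw [hmu]; exact (I.prefD_none e.1 e ⟨he, rfl⟩).1
  · rw [hmu]; exact htop g ⟨hσE hg, hσR g hg⟩ hg1

structure PInv (R : Set (D × H)) : Prop where
  sub : R ⊆ I.E
  r1 : ∀ σ, I.stable σ → ∀ e ∈ R, e ∉ σ
  r5 : ∀ e ∈ R, ∀ f ∈ I.E \ R, f.1 = e.1 → I.prefD e.1 (some e) (some f)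

end SSMC

lemma preproc_exists_aux {D H : Type} [Fintype D] [Fintype H] (I : SSMC D H) :
    ∀ (n : ℕ) (R : Set (D × H)), I.PInv R → (I.E \ R).ncard ≤ n →
      ∃ R' μ : Set (D × H), I.preproc R' μ := by
  intro n
  induction n using Nat.strong_induction_on with
  | _ n ih =>
  intro R hInv hcard
  classical
  set L : Set (D × H) := I.ChD (I.E \ R) with hLdef
  have hFE : I.E \ R ⊆ I.E := Set.diff_subset
  have hLF : L ⊆ I.E \ R := I.chD_subset (I.E \ R)
  have hLE : L ⊆ I.E := hLF.trans hFE
  -- generic recursion step: delete a nonempty set of current top edges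
  have hrec : ∀ Δ : Set (D × H), Δ.Nonempty → Δ ⊆ L →
      (∀ σ, I.stable σ → ∀ e ∈ Δ, e ∉ σ) → ∃ R' μ : Set (D × H), I.preproc R' μ := by
    intro Δ hΔne hΔL hΔ1
    have hΔF : Δ ⊆ I.E \ R := hΔL.trans hLF
    have hInv' : I.PInv (R ∪ Δ) := by
      refine ⟨Set.union_subset hInv.sub (hΔF.trans hFE), ?_, ?_⟩
      · intro σ hσ e he
        rcases he with heR | heΔ
        · exact hInv.r1 σ hσ e heR
        · exact hΔ1 σ hσ e heΔ
      · intro e he f hf hf1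
        have hfF : f ∈ I.E \ R := ⟨hf.1, fun c => hf.2 (Or.inl c)⟩
        rcases he with heR | heΔ
        · exact hInv.r5 e heR f hfF hf1
        · exact I.chD_top (hΔL heΔ) hfF hf1
    have hdiff : I.E \ (R ∪ Δ) = (I.E \ R) \ Δ := by
      rw [Set.diff_diff]
    have hlt : (I.E \ (R ∪ Δ)).ncard < n := by
      have hssub : (I.E \ R) \ Δ ⊂ I.E \ R := by
        obtain ⟨x, hx⟩ := hΔne
        exact ⟨Set.diff_subset, fun hsub => (hsub (hΔF hx)).2 hx⟩
      have := Set.ncard_lt_ncard hssub (Set.toFinite _)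
      rw [hdiff]
      omega
    exact ih _ hlt (R ∪ Δ) hInv' le_rfl
  by_cases hset : ∀ e ∈ L, ∀ f ∈ L, f.2 = e.2 → I.prefH e.2 (some e) (some f)
  · -- settled: the edges held by each hospital are tied
    have hChEq : I.Ch (I.E \ R) = L := by
      apply Set.eq_of_subset_of_subset
      · exact fun e he => he.1
      · exact fun e he => ⟨he, fun f hf hf2 => hset e he f hf hf2⟩
    by_cases h3 : ∃ e ∈ R, ∃ f ∈ L, f.2 = e.2 ∧
        I.prefH e.2 (some e) (some f) ∧ ¬ I.prefH e.2 (some f) (some e)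
    · -- rule 3: a deleted edge strictly dominates a current top edge at a hospital
      obtain ⟨e, heR, f, hfL, hfe, hp, hnp⟩ := h3
      refine hrec {f} ⟨f, rfl⟩ (Set.singleton_subset_iff.mpr hfL) ?_
      intro σ hσ x hx hxσ
      have hx' : x = f := hx
      subst hx'
      obtain ⟨hσE, hmd, hmh⟩ := hσ.1
      have hσR : ∀ g ∈ σ, g ∉ R := fun g hg hgR => hInv.r1 σ hσ g hgR hg
      have hmuH : muH σ e.2 = some x := by
        have := muH_eq_some hmh hxσ
        rwa [hfe] at this
      apply hσ.2 e
      refine ⟨hInv.sub heR, hInv.r1 σ hσ e heR, ?_, ?_, ?_⟩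
      · exact I.pref_muD hσE hσR (hInv.sub heR) (fun y hy hy1 => hInv.r5 e heR y hy hy1)
      · rw [hmuH]
        exact ⟨hp, by simp⟩
      · right
        rw [hmuH]
        exact ⟨⟨hp, hnp⟩, by simp⟩
    · by_cases h4 : ∃ e ∈ R, ∃ f ∈ L, f.2 = e.2 ∧ I.prefH e.2 (some e) (some f) ∧
          ∀ g ∈ L, g.1 = e.1 →
            I.prefD e.1 (some e) (some g) ∧ ¬ I.prefD e.1 (some g) (some e)
      · -- rule 4: a deleted edge ties at a hospital and is strictly better for its doctor
        obtain ⟨e, heR, f, hfL, hfe, hp, hC⟩ := h4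
        refine hrec {f} ⟨f, rfl⟩ (Set.singleton_subset_iff.mpr hfL) ?_
        intro σ hσ x hx hxσ
        have hx' : x = f := hx
        subst hx'
        obtain ⟨hσE, hmd, hmh⟩ := hσ.1
        have hσR : ∀ g ∈ σ, g ∉ R := fun g hg hgR => hInv.r1 σ hσ g hgR hg
        have hmuH : muH σ e.2 = some x := by
          have := muH_eq_some hmh hxσ
          rwa [hfe] at this
        have hstrd : I.prefD e.1 (some e) (muD σ e.1) ∧
            ¬ I.prefD e.1 (muD σ e.1) (some e) := by
          rcases muD_cases σ e.1 with hmu | ⟨g, hg, hg1, hmu⟩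
          · rw [hmu]
            exact I.prefD_none e.1 e ⟨hInv.sub heR, rfl⟩
          · rw [hmu]
            have hgF : g ∈ I.E \ R := ⟨hσE hg, hσR g hg⟩
            obtain ⟨m, hmL, hm1⟩ := I.chD_nonempty hFE ⟨g, hgF, rfl⟩
            have hm1' : m.1 = e.1 := hm1.trans hg1
            obtain ⟨hpem, hnpme⟩ := hC m hmL hm1'
            have hpmg : I.prefD e.1 (some m) (some g) := by
              have := I.chD_top hmL hgF hm1.symm
              rwa [hm1'] at this
            have ome : some e ∈ optD I.E e.1 := I.mem_optD_of (hInv.sub heR) rfl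
            have omm : some m ∈ optD I.E e.1 := I.mem_optD_of (hLE hmL) hm1'
            have omg : some g ∈ optD I.E e.1 := I.mem_optD_of (hσE hg) hg1
            refine ⟨I.prefD_trans e.1 _ ome _ omm _ omg hpem hpmg, ?_⟩
            intro hge
            exact hnpme (I.prefD_trans e.1 _ omm _ omg _ ome hpmg hge)
        apply hσ.2 e
        refine ⟨hInv.sub heR, hInv.r1 σ hσ e heR, hstrd.1, ?_, Or.inl hstrd⟩
        rw [hmuH]
        exact ⟨hp, by simp⟩
      · -- no deletions of type 3/4 remain: look for a saturating matching
        let ι := {d : D // ∃ e ∈ I.E \ R, e.1 = d}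
        haveI : Fintype ι := Fintype.ofFinite _
        let t : ι → Finset H := fun d => Finset.univ.filter (fun h => (d.1, h) ∈ L)
        have ht : ∀ (d : ι) (h : H), h ∈ t d ↔ (d.1, h) ∈ L := by
          intro d h; simp [t]
        by_cases hHall : ∀ s : Finset ι, s.card ≤ (s.biUnion t).card
        · -- terminal case: Hall's condition holds
          obtain ⟨f, hfinj, hft⟩ :=
            (Finset.all_card_le_biUnion_card_iff_exists_injective t).mp hHall
          set μ : Set (D × H) := {x | ∃ d : ι, x = (d.1, f d)} with hμdef
          have hμL : μ ⊆ L := by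
            rintro x ⟨d, rfl⟩
            exact (ht d (f d)).mp (hft d)
          have hmatch : I.isMatching μ := by
            refine ⟨hμL.trans hLE, ?_, ?_⟩
            · rintro a ⟨da, rfl⟩ b ⟨db, rfl⟩ h1
              have : da = db := Subtype.ext h1
              rw [this]
            · rintro a ⟨da, rfl⟩ b ⟨db, rfl⟩ h2
              have : da = db := hfinj h2
              rw [this]
          refine ⟨R, μ, hInv.sub, hmatch, hInv.r1, ?_, ?_, ?_, ?_⟩
          · rw [hChEq]; exact hμL
          · intro d hd
            exact ⟨(d, f ⟨d, hd⟩), ⟨⟨d, hd⟩, rfl⟩, rfl⟩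
          · -- (R4)
            rw [hChEq]
            apply Set.eq_empty_iff_forall_notMem.mpr
            rintro e ⟨heR, hbl⟩
            obtain ⟨heE, henL, hex, hc4, hc5, hc6⟩ := hbl
            rcases hc4 with hsucc | hsim
            · obtain ⟨g, hgL, hg2, hpr⟩ := hc5 hsucc
              apply h4
              refine ⟨e, heR, g, hgL, hg2, hpr, ?_⟩
              intro g' hg'L hg'1
              rcases hsucc with hall | ⟨g0, hg0L, hg01, hstr⟩
              · exact absurd hg'1 (hall g' hg'L)
              · obtain ⟨hs1, hs2⟩ := hstr
                have hpg : I.prefD e.1 (some g0) (some g') := by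
                  have := I.chD_top hg0L (hLF hg'L) (hg'1.trans hg01.symm)
                  rwa [hg01] at this
                have ome : some e ∈ optD I.E e.1 := I.mem_optD_of heE rfl
                have omg0 : some g0 ∈ optD I.E e.1 := I.mem_optD_of (hLE hg0L) hg01
                have omg' : some g' ∈ optD I.E e.1 := I.mem_optD_of (hLE hg'L) hg'1
                refine ⟨I.prefD_trans e.1 _ ome _ omg0 _ omg' hs1 hpg, ?_⟩
                intro hge
                exact hs2 (I.prefD_trans e.1 _ omg0 _ omg' _ ome hpg hge)
            · obtain ⟨g, hgL, hg2, hstr⟩ := hc6 hsim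
              exact h3 ⟨e, heR, g, hgL, hg2, hstr.1, hstr.2⟩
          · -- (R5)
            intro d e heR he1 f' hf' hf'1
            have := hInv.r5 e heR f' hf' (hf'1.trans he1.symm)
            rwa [he1] at this
        · -- critical case: Hall's condition fails
          push_neg at hHall
          obtain ⟨sbad, hsbad⟩ := hHall
          have hvne : (Finset.univ.filter
              (fun s : Finset ι => (s.biUnion t).card < s.card)).Nonempty :=
            ⟨sbad, Finset.mem_filter.mpr ⟨Finset.mem_univ _, hsbad⟩⟩
          obtain ⟨s0, hs0mem, hs0min⟩ := Finset.exists_min_image _ Finset.card hvne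
          have hs0 : (s0.biUnion t).card < s0.card := (Finset.mem_filter.mp hs0mem).2
          set Δ : Set (D × H) := {x | x ∈ L ∧ ∃ d ∈ s0, (d.1, x.2) ∈ L} with hΔdef
          have hΔL : Δ ⊆ L := fun x hx => hx.1
          have hΔne : Δ.Nonempty := by
            have hpos : 0 < s0.card := lt_of_le_of_lt (Nat.zero_le _) hs0
            obtain ⟨d0, hd0⟩ := Finset.card_pos.mp hpos
            obtain ⟨e', he'L, he'1⟩ := I.chD_nonempty hFE d0.2
            refine ⟨e', he'L, d0, hd0, ?_⟩
            have hpe : (d0.1, e'.2) = e' := by rw [← he'1]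
            rw [hpe]; exact he'L
          refine hrec Δ hΔne hΔL ?_
          intro σ hσ e0 he0Δ he0σ
          obtain ⟨he0L, dz, hdzs0, hdzL⟩ := he0Δ
          obtain ⟨hσE, hmd, hmh⟩ := hσ.1
          have hσR : ∀ g ∈ σ, g ∉ R := fun g hg hgR => hInv.r1 σ hσ g hgR hg
          have hσF : ∀ g ∈ σ, g ∈ I.E \ R := fun g hg => ⟨hσE hg, hσR g hg⟩
          set A : Finset ι := s0.filter (fun d => ∃ g ∈ σ, g.1 = d.1 ∧ g ∈ L) with hAdef
          have hkey : ∀ d1 ∈ s0, d1 ∉ A → ∀ e1 ∈ L, e1.1 = d1.1 →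
              ∀ f1 ∈ σ, f1.2 = e1.2 → f1 ∉ L := by
            intro d1 hd1 hd1A e1 he1L he11 f1 hf1σ hf12 hf1L
            have hnoL : ¬ ∃ g ∈ σ, g.1 = d1.1 ∧ g ∈ L := fun hx =>
              hd1A (Finset.mem_filter.mpr ⟨hd1, hx⟩)
            have hstrd : I.prefD e1.1 (some e1) (muD σ e1.1) ∧
                ¬ I.prefD e1.1 (muD σ e1.1) (some e1) := by
              rcases muD_cases σ e1.1 with hmu | ⟨x, hxσ, hx1, hmu⟩
              · rw [hmu]; exact I.prefD_none e1.1 e1 ⟨hLE he1L, rfl⟩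
              · rw [hmu]
                have hxF : x ∈ I.E \ R := hσF x hxσ
                have hxnL : x ∉ L := fun hxL => hnoL ⟨x, hxσ, hx1.trans he11, hxL⟩
                refine ⟨I.chD_top he1L hxF hx1, ?_⟩
                intro hxe
                apply hxnL
                refine ⟨hxF, ?_⟩
                intro y hy hy1
                have ome1 : some e1 ∈ optD I.E e1.1 := I.mem_optD_of (hLE he1L) rfl
                have omx : some x ∈ optD I.E e1.1 := I.mem_optD_of hxF.1 hx1
                have omy : some y ∈ optD I.E e1.1 := I.mem_optD_of hy.1 (hy1.trans hx1)
                rw [hx1]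
                exact I.prefD_trans e1.1 _ omx _ ome1 _ omy hxe
                  (I.chD_top he1L hy (hy1.trans hx1))
            have hmuH : muH σ e1.2 = some f1 := by
              have := muH_eq_some hmh hf1σ
              rwa [hf12] at this
            apply hσ.2 e1
            refine ⟨hLE he1L, ?_, hstrd.1, ?_, Or.inl hstrd⟩
            · intro he1σ; exact hnoL ⟨e1, he1σ, he11, he1L⟩
            · rw [hmuH]
              exact ⟨hset e1 he1L f1 hf1L hf12, by simp⟩
          have hdzA : dz ∈ A := by
            by_contra hdzA
            exact hkey dz hdzs0 hdzA (dz.1, e0.2) hdzL rfl e0 he0σ rfl he0L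
          have hyex : ∀ d : ι, d ∈ A → ∃ g, g ∈ σ ∧ g.1 = d.1 ∧ g ∈ L := by
            intro d hd
            obtain ⟨g, h1, h2, h3'⟩ := (Finset.mem_filter.mp hd).2
            exact ⟨g, h1, h2, h3'⟩
          set y : ι → H := fun d =>
            if hd : ∃ g, g ∈ σ ∧ g.1 = d.1 ∧ g ∈ L then hd.choose.2 else e0.2 with hydef
          have hy : ∀ d ∈ A, ∃ g ∈ σ, g.1 = d.1 ∧ g ∈ L ∧ g.2 = y d := by
            intro d hd
            have hd' := hyex d hd
            refine ⟨hd'.choose, hd'.choose_spec.1, hd'.choose_spec.2.1,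
              hd'.choose_spec.2.2, ?_⟩
            simp only [hydef, dif_pos hd']
          have hyinj : Set.InjOn y ↑A := by
            intro d hd d' hd' heq
            obtain ⟨g, hgσ, hg1, hgL, hg2⟩ := hy d hd
            obtain ⟨g', hg'σ, hg'1, hg'L, hg'2⟩ := hy d' hd'
            have hgg : g = g' := hmh g hgσ g' hg'σ (by rw [hg2, hg'2, heq])
            apply Subtype.ext
            rw [← hg1, ← hg'1, hgg]
          have hBsub : (s0 \ A).biUnion t ⊆ (s0.biUnion t) \ (A.image y) := by
            intro h hh
            obtain ⟨d, hdB, hht⟩ := Finset.mem_biUnion.mp hh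
            obtain ⟨hds0, hdnA⟩ := Finset.mem_sdiff.mp hdB
            have hdL : (d.1, h) ∈ L := (ht d h).mp hht
            refine Finset.mem_sdiff.mpr ⟨Finset.mem_biUnion.mpr ⟨d, hds0, hht⟩, ?_⟩
            intro hmem
            obtain ⟨d', hd'A, hyd'⟩ := Finset.mem_image.mp hmem
            obtain ⟨g, hgσ, hg1, hgL, hg2⟩ := hy d' hd'A
            exact hkey d hds0 hdnA (d.1, h) hdL rfl g hgσ (by rw [hg2, hyd']) hgL
          have hAsub : A.image y ⊆ s0.biUnion t := by
            intro h hmem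
            obtain ⟨d', hd'A, hyd'⟩ := Finset.mem_image.mp hmem
            obtain ⟨g, hgσ, hg1, hgL, hg2⟩ := hy d' hd'A
            refine Finset.mem_biUnion.mpr
              ⟨d', (Finset.mem_filter.mp hd'A).1, (ht d' h).mpr ?_⟩
            have hgh : g = (d'.1, h) := by rw [← hg1, ← (hg2.trans hyd')]
            rw [← hgh]; exact hgL
          have hcim : (A.image y).card = A.card := Finset.card_image_of_injOn hyinj
          have h1c : ((s0 \ A).biUnion t).card ≤ (s0.biUnion t).card - A.card := by
            have := Finset.card_le_card hBsub
            rwa [Finset.card_sdiff_of_subset hAsub, hcim] at this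
          have h2c : A.card ≤ (s0.biUnion t).card := by
            rw [← hcim]; exact Finset.card_le_card hAsub
          have h5c : (s0 \ A).card = s0.card - A.card :=
            Finset.card_sdiff_of_subset (Finset.filter_subset _ _)
          have h4c : A.card ≤ s0.card := Finset.card_le_card (Finset.filter_subset _ _)
          have hBviol : ((s0 \ A).biUnion t).card < (s0 \ A).card := by omega
          have hmin := hs0min (s0 \ A)
            (Finset.mem_filter.mpr ⟨Finset.mem_univ _, hBviol⟩)
          have h3c : 1 ≤ A.card := Finset.card_pos.mpr ⟨dz, hdzA⟩
          omega
  · -- not settled: rule (a)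
    push_neg at hset
    obtain ⟨e, heL, f, hfL, hfe, hnp⟩ := hset
    have hoe : some e ∈ optH I.E e.2 := I.mem_optH_of (hLE heL) rfl
    have hof : some f ∈ optH I.E e.2 := I.mem_optH_of (hLE hfL) hfe
    have hpf : I.prefH e.2 (some f) (some e) :=
      (I.prefH_total e.2 _ hoe _ hof).resolve_left hnp
    have hne : f ≠ e := by
      rintro rfl; exact hnp hpf
    refine hrec {e} ⟨e, rfl⟩ (Set.singleton_subset_iff.mpr heL) ?_
    intro σ hσ x hx hxσ
    have hx' : x = e := hx
    subst hx'
    obtain ⟨hσE, hmd, hmh⟩ := hσ.1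
    have hσR : ∀ g ∈ σ, g ∉ R := fun g hg hgR => hInv.r1 σ hσ g hgR hg
    have hmuH : muH σ f.2 = some x := by
      have := muH_eq_some hmh hxσ
      rw [hfe]; exact this
    apply hσ.2 f
    refine ⟨hLE hfL, ?_, ?_, ?_, ?_⟩
    · intro hfσ
      exact hne (hmh f hfσ _ hxσ hfe)
    · exact I.pref_muD hσE hσR (hLE hfL) (fun z hz hz1 => I.chD_top hfL hz hz1)
    · rw [hmuH, hfe]
      exact ⟨hpf, by simp⟩
    · right
      rw [hmuH, hfe]
      exact ⟨⟨hpf, hnp⟩, by simp⟩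


/-- Lemma: pre-processing: every instance admits a subset `R ⊆ E`
and a matching `μ` satisfying (R1)–(R5). -/
theorem preprocessing_exists {D H : Type} [Fintype D] [Fintype H] (I : SSMC D H) :
    ∃ R μ : Set (D × H), I.preproc R μ :=
  preproc_exists_aux I (I.E \ ∅).ncard ∅
    ⟨Set.empty_subset _, fun _ _ e he => absurd he (Set.notMem_empty e),
      fun e he => absurd he (Set.notMem_empty e)⟩ le_rfl
end

section
/- Let (R, μ) satisfy the pre-processing conditions and suppose that μ is a stable matching in G. Then for every stable matching σ in G and every doctor d ∈ D, μ(d) ≿_d σ(d) (where an unmatched doctor is treated as matched to ∅). -/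
open Classical

variable {D H : Type}

/-- if `(R, μ)` satisfies the pre-processing conditions and `μ`
is stable, then every doctor weakly prefers `μ` to any stable matching `σ`. -/
theorem mu_doctor_optimal {D H : Type} [Fintype D] [Fintype H]
    (I : SSMC D H) (R μ : Set (D × H)) (hpre : I.preproc R μ)
    (hstab : I.stable μ) :
    ∀ σ : Set (D × H), I.stable σ → ∀ d : D, I.prefD d (muD μ d) (muD σ d) := by
  intro σ hσ d
  obtain ⟨hRE, hμmatch, hR1, hR2, hR3, hR4, hR5⟩ := hpre
  unfold muD
  by_cases h2 : ∃ e, e ∈ σ ∧ e.1 = d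
  · -- σ(d) = some f
    obtain ⟨hf, hfd⟩ := h2.choose_spec
    set f := h2.choose
    have hfE : f ∈ I.E := hσ.1.1 hf
    have hfR : f ∉ R := fun hr => hR1 σ hσ f hr hf
    have hfER : f ∈ I.E \ R := ⟨hfE, hfR⟩
    have hμd : ∃ e, e ∈ μ ∧ e.1 = d := by
      obtain ⟨e, he, hed⟩ := hR3 d ⟨f, hfER, hfd⟩
      exact ⟨e, he, hed⟩
    rw [dif_pos hμd, dif_pos h2]
    obtain ⟨he, hed⟩ := hμd.choose_spec
    set e := hμd.choose
    have heCh : e ∈ I.Ch (I.E \ R) := hR2 he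
    have heChD : e ∈ I.ChD (I.E \ R) := heCh.1
    have := heChD.2 f hfER (by rw [hfd, hed])
    rwa [hed] at this
  · rw [dif_neg h2]
    by_cases h1 : ∃ e, e ∈ μ ∧ e.1 = d
    · rw [dif_pos h1]
      obtain ⟨he, hed⟩ := h1.choose_spec
      set e := h1.choose
      have heE : e ∈ I.E := hμmatch.1 he
      exact (I.prefD_none d e ⟨heE, hed⟩).1
    · rw [dif_neg h1]
      have hnone : (none : Option (D × H)) ∈ optD I.E d := Set.mem_insert _ _
      rcases I.prefD_total d none hnone none hnone with h | h <;> exact h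
end

section
/- Let (R, μ) satisfy the pre-processing conditions. If there does not exist a critical hospital with respect to (R, μ), then μ is a stable matching in G such that, for every stable matching σ in G and every doctor d ∈ D, μ(d) ≿_d σ(d). -/
open Classical

variable {D H : Type}

section Helpers

lemma muD_spec {D H : Type} {μ : Set (D × H)}
    (hm : ∀ e ∈ μ, ∀ f ∈ μ, e.1 = f.1 → e = f) {e : D × H} (he : e ∈ μ) :
    muD μ e.1 = some e := by
  have hex : ∃ f, f ∈ μ ∧ f.1 = e.1 := ⟨e, he, rfl⟩
  simp only [muD, dif_pos hex]
  exact congrArg some (hm _ hex.choose_spec.1 _ he hex.choose_spec.2)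

lemma muH_spec {D H : Type} {μ : Set (D × H)}
    (hm : ∀ e ∈ μ, ∀ f ∈ μ, e.2 = f.2 → e = f) {e : D × H} (he : e ∈ μ) :
    muH μ e.2 = some e := by
  have hex : ∃ f, f ∈ μ ∧ f.2 = e.2 := ⟨e, he, rfl⟩
  simp only [muH, dif_pos hex]
  exact congrArg some (hm _ hex.choose_spec.1 _ he hex.choose_spec.2)

lemma muD_none {D H : Type} {μ : Set (D × H)} {d : D}
    (h : ¬ ∃ f, f ∈ μ ∧ f.1 = d) : muD μ d = none := by
  simp only [muD, dif_neg h]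

lemma muH_none {D H : Type} {μ : Set (D × H)} {hh : H}
    (h : ¬ ∃ f, f ∈ μ ∧ f.2 = hh) : muH μ hh = none := by
  simp only [muH, dif_neg h]

lemma exists_max_finset {α : Type*} (r : α → α → Prop) (s : Finset α) :
    s.Nonempty →
    (∀ a ∈ s, ∀ b ∈ s, r a b ∨ r b a) →
    (∀ a ∈ s, ∀ b ∈ s, ∀ c ∈ s, r a b → r b c → r a c) →
    ∃ m ∈ s, ∀ x ∈ s, r m x := by
  classical
  induction s using Finset.induction_on with
  | empty => intro h; simp at h
  | @insert a s ha ih =>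
    intro _ htot htrans
    by_cases hs : s.Nonempty
    · obtain ⟨m, hm, hmax⟩ := ih hs
        (fun x hx y hy => htot x (Finset.mem_insert_of_mem hx) y (Finset.mem_insert_of_mem hy))
        (fun x hx y hy z hz => htrans x (Finset.mem_insert_of_mem hx)
          y (Finset.mem_insert_of_mem hy) z (Finset.mem_insert_of_mem hz))
      have hma : a ∈ insert a s := Finset.mem_insert_self a s
      have hms : m ∈ insert a s := Finset.mem_insert_of_mem hm
      rcases htot m hms a hma with h1 | h1
      · refine ⟨m, hms, fun x hx => ?_⟩
        rcases Finset.mem_insert.1 hx with rfl | hx'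
        · exact h1
        · exact hmax x hx'
      · refine ⟨a, hma, fun x hx => ?_⟩
        rcases Finset.mem_insert.1 hx with rfl | hx'
        · rcases htot _ hx _ hx with h | h <;> exact h
        · exact htrans _ hma m hms x (Finset.mem_insert_of_mem hx') h1 (hmax x hx')
    · have hse : s = ∅ := Finset.not_nonempty_iff_eq_empty.1 hs
      subst hse
      refine ⟨a, Finset.mem_insert_self a _, fun x hx => ?_⟩
      rcases Finset.mem_insert.1 hx with rfl | hx'
      · rcases htot _ hx _ hx with h | h <;> exact h
      · exact absurd hx' (Finset.notMem_empty x)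

end Helpers

/-- Lemma: no critical hospital: if `(R, μ)` satisfies the
pre-processing conditions and there is no critical hospital with respect to
`(R, μ)`, then `μ` is stable and every doctor weakly prefers `μ` to any
stable matching. -/
theorem no_critical_implies_stable {D H : Type} [Fintype D] [Fintype H]
    (I : SSMC D H) (R μ : Set (D × H)) (hpre : I.preproc R μ)
    (hnc : ¬ ∃ h : H, I.critical R μ h) :
    I.stable μ ∧
      ∀ σ : Set (D × H), I.stable σ → ∀ d : D, I.prefD d (muD μ d) (muD σ d) := by
  classical
  obtain ⟨hRE, hμmatch, hR1, hR2, hR3, hR4, hR5⟩ := hpre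
  obtain ⟨hμE, hμd, hμh⟩ := hμmatch
  -- basic facts about L = Ch (E \ R)
  have hLsub : I.Ch (I.E \ R) ⊆ I.E \ R := fun e he => he.1.1
  have hLD : ∀ e ∈ I.Ch (I.E \ R), ∀ f ∈ I.E \ R, f.1 = e.1 →
      I.prefD e.1 (some e) (some f) := fun e he => he.1.2
  have hLH : ∀ e ∈ I.Ch (I.E \ R), ∀ f ∈ I.ChD (I.E \ R), f.2 = e.2 →
      I.prefH e.2 (some e) (some f) := fun e he => he.2
  have hμL : ∀ m ∈ μ, m ∈ I.Ch (I.E \ R) := fun m hm => hR2 hm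
  have hμER : ∀ m ∈ μ, m ∈ I.E \ R := fun m hm => ((hR2 hm).1.1)
  have hμChD : ∀ m ∈ μ, ∀ f ∈ I.E \ R, f.1 = m.1 → I.prefD m.1 (some m) (some f) :=
    fun m hm => (hR2 hm).1.2
  have hopt : ∀ (d : D) (x : D × H), x ∈ I.E → x.1 = d → some x ∈ optD I.E d :=
    fun d x hx h1 => Set.mem_insert_of_mem _ ⟨x, ⟨hx, h1⟩, rfl⟩
  have hoptH : ∀ (h : H) (x : D × H), x ∈ I.E → x.2 = h → some x ∈ optH I.E h :=
    fun h x hx h2 => Set.mem_insert_of_mem _ ⟨x, ⟨hx, h2⟩, rfl⟩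
  have hstable : I.stable μ := by
    refine ⟨⟨hμE, hμd, hμh⟩, ?_⟩
    intro e hb
    obtain ⟨heE, heμ, hwd, ⟨hwh, hSh⟩, hstrong⟩ := hb
    by_cases heR : e ∈ R
    · -- e ∈ R : show e ∈ block(L), contradicting (R4)
      have hμhne : ∃ m ∈ μ, m.2 = e.2 := by
        by_contra hcon
        push_neg at hcon
        have hmu : muH μ e.2 = none := by
          refine muH_none ?_
          rintro ⟨f, hf, hf2⟩; exact hcon f hf hf2
        have hS : e.2 ∉ I.S := fun hs => (hSh hs) hmu
        exact hnc ⟨e.2, hS, hcon, Or.inr ⟨e, heR, rfl⟩⟩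
      obtain ⟨m', hm'μ, hm'2⟩ := hμhne
      have hmuH : muH μ e.2 = some m' := by rw [← hm'2]; exact muH_spec hμh hm'μ
      rw [hmuH] at hwh
      have hblk : e ∈ I.setBlock (I.Ch (I.E \ R)) := by
        refine ⟨heE, fun heL => (hLsub heL).2 heR, ⟨m', hμL m' hm'μ, hm'2⟩, ?_, ?_, ?_⟩
        · by_cases hLd : ∃ f ∈ I.Ch (I.E \ R), f.1 = e.1
          · obtain ⟨f, hfL, hf1⟩ := hLd
            have hef : I.prefD e.1 (some e) (some f) := hR5 e.1 e heR rfl f (hLsub hfL) hf1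
            by_cases hfe : I.prefD e.1 (some f) (some e)
            · exact Or.inr ⟨f, hfL, hf1, hef, hfe⟩
            · exact Or.inl (Or.inr ⟨f, hfL, hf1, hef, hfe⟩)
          · push_neg at hLd
            exact Or.inl (Or.inl hLd)
        · intro _
          exact ⟨m', hμL m' hm'μ, hm'2, hwh⟩
        · rintro ⟨f, hfL, hf1, hsim⟩
          obtain ⟨m, hmμ, hm1⟩ := hR3 e.1 ⟨f, hLsub hfL, hf1⟩
          have hmuD : muD μ e.1 = some m := by rw [← hm1]; exact muD_spec hμd hmμ
          have hfm : I.prefD e.1 (some f) (some m) := by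
            have := hLD f hfL m (hμER m hmμ) (hm1.trans hf1.symm)
            rwa [hf1] at this
          have hmf : I.prefD e.1 (some m) (some f) := by
            have := hμChD m hmμ f (hLsub hfL) (hf1.trans hm1.symm)
            rwa [hm1] at this
          have hEe := hopt e.1 e heE rfl
          have hEf := hopt e.1 f (hLsub hfL).1 hf1
          have hEm := hopt e.1 m (hμE hmμ) hm1
          have hme : I.prefD e.1 (some m) (some e) :=
            I.prefD_trans e.1 _ hEm _ hEf _ hEe hmf hsim.2
          rcases hstrong with hs | hs
          · rw [hmuD] at hs
            exact absurd hme hs.2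
          · rw [hmuH] at hs
            exact ⟨m', hμL m' hm'μ, hm'2, hs.1⟩
      exact (Set.eq_empty_iff_forall_notMem.mp hR4) e ⟨heR, hblk⟩
    · -- e ∉ R
      have heER : e ∈ I.E \ R := ⟨heE, heR⟩
      obtain ⟨m, hmμ, hm1⟩ := hR3 e.1 ⟨e, heER, rfl⟩
      have hmuD : muD μ e.1 = some m := by rw [← hm1]; exact muD_spec hμd hmμ
      have hme : I.prefD e.1 (some m) (some e) := by
        have := hμChD m hmμ e heER hm1.symm
        rwa [hm1] at this
      rw [hmuD] at hwd
      have heChD : e ∈ I.ChD (I.E \ R) := by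
        refine ⟨heER, fun f hf hf1 => ?_⟩
        have hmf : I.prefD e.1 (some m) (some f) := by
          have := hμChD m hmμ f hf (hf1.trans hm1.symm)
          rwa [hm1] at this
        exact I.prefD_trans e.1 _ (hopt _ e heE rfl) _ (hopt _ m (hμE hmμ) hm1)
          _ (hopt _ f hf.1 hf1) hwd hmf
      by_cases hμH : ∃ m' ∈ μ, m'.2 = e.2
      · obtain ⟨m', hm'μ, hm'2⟩ := hμH
        have hmuH : muH μ e.2 = some m' := by rw [← hm'2]; exact muH_spec hμh hm'μ
        have hm'e : I.prefH e.2 (some m') (some e) := by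
          have := hLH m' (hμL m' hm'μ) e heChD hm'2.symm
          rwa [hm'2] at this
        rcases hstrong with hs | hs
        · rw [hmuD] at hs
          exact hs.2 hme
        · rw [hmuH] at hs
          exact hs.1.2 hm'e
      · push_neg at hμH
        have hmuH : muH μ e.2 = none := by
          refine muH_none ?_
          rintro ⟨f, hf, hf2⟩; exact hμH f hf hf2
        have hS : e.2 ∉ I.S := fun hs => hSh hs hmuH
        -- build an element of L(e.2), contradicting non-criticality
        have hXfin : Set.Finite {f : D × H | f ∈ I.ChD (I.E \ R) ∧ f.2 = e.2} :=
          Set.toFinite _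
        have hXne : hXfin.toFinset.Nonempty :=
          ⟨e, by rw [Set.Finite.mem_toFinset]; exact ⟨heChD, rfl⟩⟩
        have hXopt : ∀ x ∈ hXfin.toFinset, some x ∈ optH I.E e.2 := by
          intro x hx
          rw [Set.Finite.mem_toFinset] at hx
          exact hoptH e.2 x hx.1.1.1 hx.2
        obtain ⟨mx, hmx, hmax⟩ := exists_max_finset
          (fun a b => I.prefH e.2 (some a) (some b)) hXfin.toFinset hXne
          (fun a ha b hb => I.prefH_total e.2 _ (hXopt a ha) _ (hXopt b hb))
          (fun a ha b hb c hc => I.prefH_trans e.2 _ (hXopt a ha) _ (hXopt b hb)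
            _ (hXopt c hc))
        rw [Set.Finite.mem_toFinset] at hmx
        have hmxL : mx ∈ I.Ch (I.E \ R) := by
          refine ⟨hmx.1, fun f hf hf2 => ?_⟩
          rw [hmx.2]
          exact hmax f (by rw [Set.Finite.mem_toFinset]; exact ⟨hf, hf2.trans hmx.2⟩)
        exact hnc ⟨e.2, hS, hμH, Or.inl ⟨mx, hmxL, hmx.2⟩⟩
  refine ⟨hstable, ?_⟩
  intro σ hσ d
  have hσR : ∀ s ∈ σ, s ∉ R := fun s hs hsR => hR1 σ hσ s hsR hs
  by_cases hσd : ∃ s, s ∈ σ ∧ s.1 = d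
  · obtain ⟨s, hsσ, hs1⟩ := hσd
    have hmuσ : muD σ d = some s := by rw [← hs1]; exact muD_spec hσ.1.2.1 hsσ
    have hsER : s ∈ I.E \ R := ⟨hσ.1.1 hsσ, hσR s hsσ⟩
    obtain ⟨m, hmμ, hm1⟩ := hR3 d ⟨s, hsER, hs1⟩
    have hmuμ : muD μ d = some m := by rw [← hm1]; exact muD_spec hμd hmμ
    rw [hmuσ, hmuμ]
    have := hμChD m hmμ s hsER (hs1.trans hm1.symm)
    rwa [hm1] at this
  · rw [muD_none hσd]
    by_cases hμdd : ∃ m, m ∈ μ ∧ m.1 = d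
    · obtain ⟨m, hmμ, hm1⟩ := hμdd
      have hmuμ : muD μ d = some m := by rw [← hm1]; exact muD_spec hμd hmμ
      rw [hmuμ]
      exact (I.prefD_none d m ⟨hμE hmμ, hm1⟩).1
    · rw [muD_none hμdd]
      exact (I.prefD_total d none (Set.mem_insert _ _) none (Set.mem_insert _ _)).elim id id
end

section
/- Under assumption (★), let (R, μ) satisfy the pre-processing conditions. If there exists a critical hospital with respect to (R, μ), then there does not exist a stable matching in G. -/
open Classical

variable {D H : Type}

/-- Auxiliary: pick the `μ`-edge at the doctor of `g` (junk value `g` if none). -/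
noncomputable def museln (μ : Set (D × H)) (g : D × H) : D × H :=
  if h : ∃ x, x ∈ μ ∧ x.1 = g.1 then h.choose else g

/-- Auxiliary: pick the `σ`-edge at the hospital of `museln μ g` (junk value `g` if none). -/
noncomputable def sigseln (σ μ : Set (D × H)) (g : D × H) : D × H :=
  if h : ∃ y, y ∈ σ ∧ y.2 = (museln μ g).2 then h.choose else g

/-- Auxiliary: the alternating chain. -/
noncomputable def chainn (σ μ : Set (D × H)) (g0 : D × H) : ℕ → D × H
  | 0 => g0
  | n + 1 => sigseln σ μ (chainn σ μ g0 n)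

/-- under assumption (★), if `(R, μ)` satisfies the pre-processing
conditions and there exists a critical hospital with respect to `(R, μ)`, then
there is no stable matching in `G`. -/
theorem critical_implies_no_stable {D H : Type} [Fintype D] [Fintype H]
    (I : SSMC D H) (hstar : I.starAssumption)
    (R μ : Set (D × H)) (hpre : I.preproc R μ)
    (hc : ∃ h : H, I.critical R μ h) :
    ¬ ∃ σ : Set (D × H), I.stable σ := by
  rintro ⟨σ, hσ⟩
  obtain ⟨h₀, hcrit⟩ := hc
  obtain ⟨hRE, hμm, hR1, hR2, hR3, hR4, hR5⟩ := hpre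
  have hσm : I.isMatching σ := hσ.1
  have hσR : ∀ e ∈ σ, e ∉ R := fun e he hr => hR1 σ hσ e hr he
  -- membership in Ch unpacked
  have hChD : ∀ e, e ∈ I.Ch (I.E \ R) →
      e ∈ I.E \ R ∧ (∀ f ∈ I.E \ R, f.1 = e.1 → I.prefD e.1 (some e) (some f)) := by
    intro e he
    have h1 : e ∈ I.ChD (I.E \ R) := he.1
    exact ⟨h1.1, h1.2⟩
  have hμbest : ∀ e ∈ μ, ∀ f ∈ I.E \ R, f.1 = e.1 → I.prefD e.1 (some e) (some f) :=
    fun e he f hf h1 => (hChD e (hR2 he)).2 f hf h1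
  -- muD at a matched doctor
  have hmuD : ∀ g, g ∈ σ → muD σ g.1 = some g := by
    intro g hg
    have hex : ∃ e, e ∈ σ ∧ e.1 = g.1 := ⟨g, hg, rfl⟩
    simp only [muD, dif_pos hex]
    exact congrArg some (hσm.2.1 _ hex.choose_spec.1 g hg hex.choose_spec.2)
  -- comparison with muD
  have hprefmu : ∀ a : D × H, a ∈ I.E →
      (∀ x ∈ σ, x.1 = a.1 → I.prefD a.1 (some a) (some x)) →
      I.prefD a.1 (some a) (muD σ a.1) := by
    intro a haE hall
    by_cases hexx : ∃ x, x ∈ σ ∧ x.1 = a.1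
    · obtain ⟨x, hx, hx1⟩ := hexx
      have hmx := hmuD x hx
      rw [hx1] at hmx
      rw [hmx]
      exact hall x hx hx1
    · rw [muD, dif_neg hexx]
      exact (I.prefD_none a.1 a ⟨haE, rfl⟩).1
  -- key blocking lemma: an unmatched non-S hospital desired by a weakly-satisfied
  -- doctor yields a blocking pair, hence the hospital is matched in σ
  have hblock : ∀ e : D × H, e ∈ I.E → e ∉ σ → e.2 ∉ I.S →
      I.prefD e.1 (some e) (muD σ e.1) → ∃ y, y ∈ σ ∧ y.2 = e.2 := by
    intro e heE heσ heS hpd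
    by_contra hno
    push_neg at hno
    have hmuHn : muH σ e.2 = none := by
      rw [muH, dif_neg]
      rintro ⟨y, hy, hy2⟩
      exact hno y hy hy2
    have hpn := I.prefH_none e.2 e ⟨heE, rfl⟩
    exact hσ.2 e ⟨heE, heσ, hpd,
      ⟨by rw [hmuHn]; exact hpn.1, fun hS => absurd hS heS⟩,
      Or.inr ⟨by rw [hmuHn]; exact ⟨hpn.1, hpn.2⟩, fun hS => absurd hS heS⟩⟩
  -- the (★) step: weakly improving edges stay outside S
  have hnotS : ∀ g e : D × H, g ∈ I.E → e ∈ I.E → e.1 = g.1 → g.2 ∉ I.S →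
      I.prefD g.1 (some e) (some g) → e.2 ∉ I.S := by
    intro g e hgE heE h1 hgS hpd hes
    have hgE' : (g.1, g.2) ∈ I.E := by rw [Prod.mk.eta]; exact hgE
    have heE' : (g.1, e.2) ∈ I.E := by rw [← h1, Prod.mk.eta]; exact heE
    have hst := hstar g.1 e.2 g.2 heE' hgE' hes hgS
    apply hst.2
    rw [show ((g.1, e.2) : D × H) = e from by rw [← h1, Prod.mk.eta],
      show ((g.1, g.2) : D × H) = g from Prod.mk.eta]
    exact hpd
  -- properties of museln at a σ-matched doctor
  have hmusel : ∀ g, g ∈ σ → museln μ g ∈ μ ∧ (museln μ g).1 = g.1 ∧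
      I.prefD g.1 (some (museln μ g)) (some g) := by
    intro g hg
    have hgER : g ∈ I.E \ R := ⟨hσm.1 hg, hσR g hg⟩
    have hex : ∃ x, x ∈ μ ∧ x.1 = g.1 := hR3 g.1 ⟨g, hgER, rfl⟩
    have hdef : museln μ g = hex.choose := by
      simp only [museln, dif_pos hex]
    obtain ⟨hm, h1⟩ := hex.choose_spec
    rw [hdef]
    refine ⟨hm, h1, ?_⟩
    have := hμbest _ hm g hgER h1.symm
    rwa [h1] at this
  -- the chain step
  have hsig : ∀ g, g ∈ σ → g.2 ∉ I.S → museln μ g ∉ σ →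
      sigseln σ μ g ∈ σ ∧ (sigseln σ μ g).2 = (museln μ g).2 ∧ (museln μ g).2 ∉ I.S := by
    intro g hgσ hgS heσ
    obtain ⟨heμ, he1, hpd⟩ := hmusel g hgσ
    have heE : museln μ g ∈ I.E := hμm.1 heμ
    have hgE : g ∈ I.E := hσm.1 hgσ
    have heS : (museln μ g).2 ∉ I.S := hnotS g (museln μ g) hgE heE he1 hgS hpd
    have hpd' : I.prefD (museln μ g).1 (some (museln μ g)) (muD σ (museln μ g).1) := by
      rw [he1, hmuD g hgσ]
      exact hpd
    have hex : ∃ y, y ∈ σ ∧ y.2 = (museln μ g).2 := hblock _ heE heσ heS hpd'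
    have hdef : sigseln σ μ g = hex.choose := by
      simp only [sigseln, dif_pos hex]
    rw [hdef]
    exact ⟨hex.choose_spec.1, hex.choose_spec.2, heS⟩
  -- base point of the chain: σ matches the critical hospital
  have hg0ex : ∃ g, g ∈ σ ∧ g.2 = h₀ := by
    rcases hcrit.2.2 with ⟨a, haL, ha2⟩ | ⟨r, hrR, hr2⟩
    · by_cases haσ : a ∈ σ
      · exact ⟨a, haσ, ha2⟩
      · have haE : a ∈ I.E := (hChD a haL).1.1
        have haS : a.2 ∉ I.S := by rw [ha2]; exact hcrit.1
        have hpd : I.prefD a.1 (some a) (muD σ a.1) :=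
          hprefmu a haE (fun x hx hx1 => (hChD a haL).2 x ⟨hσm.1 hx, hσR x hx⟩ hx1)
        obtain ⟨y, hy, hy2⟩ := hblock a haE haσ haS hpd
        exact ⟨y, hy, by rw [hy2, ha2]⟩
    · have hrσ : r ∉ σ := hR1 σ hσ r hrR
      have hrE : r ∈ I.E := hRE hrR
      have hrS : r.2 ∉ I.S := by rw [hr2]; exact hcrit.1
      have hpd : I.prefD r.1 (some r) (muD σ r.1) :=
        hprefmu r hrE (fun x hx hx1 => hR5 r.1 r hrR rfl x ⟨hσm.1 hx, hσR x hx⟩ hx1)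
      obtain ⟨y, hy, hy2⟩ := hblock r hrE hrσ hrS hpd
      exact ⟨y, hy, by rw [hy2, hr2]⟩
  obtain ⟨g₀, hg₀σ, hg₀2⟩ := hg0ex
  have hchainS : ∀ n, chainn σ μ g₀ (n + 1) = sigseln σ μ (chainn σ μ g₀ n) := fun n => rfl
  -- the chain invariant
  have hInv : ∀ n, chainn σ μ g₀ n ∈ σ ∧ (chainn σ μ g₀ n).2 ∉ I.S ∧
      museln μ (chainn σ μ g₀ n) ∉ σ := by
    intro n
    induction n with
    | zero =>
      refine ⟨hg₀σ, by rw [show chainn σ μ g₀ 0 = g₀ from rfl, hg₀2]; exact hcrit.1, ?_⟩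
      intro hmem
      obtain ⟨heμ, he1, _⟩ := hmusel g₀ hg₀σ
      have heq : museln μ g₀ = g₀ := hσm.2.1 _ hmem g₀ hg₀σ he1
      exact hcrit.2.1 g₀ (heq ▸ heμ) hg₀2
    | succ n ih =>
      obtain ⟨h1, h2, h3⟩ := ih
      have hs := hsig _ h1 h2 h3
      rw [hchainS n]
      refine ⟨hs.1, by rw [hs.2.1]; exact hs.2.2, ?_⟩
      intro hmem
      obtain ⟨heμ, he1, _⟩ := hmusel (sigseln σ μ (chainn σ μ g₀ n)) hs.1
      have heq : museln μ (sigseln σ μ (chainn σ μ g₀ n)) = sigseln σ μ (chainn σ μ g₀ n) :=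
        hσm.2.1 _ hmem _ hs.1 he1
      obtain ⟨heμ', _, _⟩ := hmusel (chainn σ μ g₀ n) h1
      have hfin : sigseln σ μ (chainn σ μ g₀ n) = museln μ (chainn σ μ g₀ n) :=
        hμm.2.2 _ (heq ▸ heμ) _ heμ' hs.2.1
      exact h3 (hfin ▸ hs.1)
  have hG2 : ∀ n, (chainn σ μ g₀ (n + 1)).2 = (museln μ (chainn σ μ g₀ n)).2 := by
    intro n
    rw [hchainS n]
    exact (hsig _ (hInv n).1 (hInv n).2.1 (hInv n).2.2).2.1
  -- the chain never returns to the start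
  have h0ne : ∀ j, chainn σ μ g₀ 0 ≠ chainn σ μ g₀ (j + 1) := by
    intro j hEq
    have h2 : (museln μ (chainn σ μ g₀ j)).2 = h₀ := by
      rw [← hG2 j, ← hEq]
      exact hg₀2
    exact hcrit.2.1 _ (hmusel _ (hInv j).1).1 h2
  -- the chain is backwards deterministic
  have hback : ∀ i j, chainn σ μ g₀ (i + 1) = chainn σ μ g₀ (j + 1) →
      chainn σ μ g₀ i = chainn σ μ g₀ j := by
    intro i j hEq
    have h2 : (museln μ (chainn σ μ g₀ i)).2 = (museln μ (chainn σ μ g₀ j)).2 := by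
      rw [← hG2 i, ← hG2 j, hEq]
    obtain ⟨hiμ, hi1, _⟩ := hmusel _ (hInv i).1
    obtain ⟨hjμ, hj1, _⟩ := hmusel _ (hInv j).1
    have he : museln μ (chainn σ μ g₀ i) = museln μ (chainn σ μ g₀ j) :=
      hμm.2.2 _ hiμ _ hjμ h2
    have h1 : (chainn σ μ g₀ i).1 = (chainn σ μ g₀ j).1 := by
      rw [← hi1, ← hj1, he]
    exact hσm.2.1 _ (hInv i).1 _ (hInv j).1 h1
  -- hence the chain is injective: contradiction with finiteness
  have key : ∀ i j, chainn σ μ g₀ i = chainn σ μ g₀ j → i = j := by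
    intro i
    induction i with
    | zero =>
      intro j h
      cases j with
      | zero => rfl
      | succ j => exact absurd h (h0ne j)
    | succ i ih =>
      intro j h
      cases j with
      | zero => exact absurd h.symm (h0ne i)
      | succ j => exact congrArg Nat.succ (ih j (hback i j h))
  have hinf : (Set.range (chainn σ μ g₀)).Infinite :=
    Set.infinite_range_of_injective (fun i j => key i j)
  exact hinf (Set.toFinite _)
end

section
/- Under assumption (★), let (R, μ) satisfy the pre-processing conditions, let σ be a stable matching in G, and let h ∈ H \ S be a hospital with σ(h) = (d,h) for some doctor d. Then every edge (d,h′) ∈ Ch_d(E \ R) satisfies h′ ∈ H \ S (that is, d belongs to the set D⁺ of doctors of D[E \ R] all of whose most-preferred edges among E \ R go to hospitals outside S). -/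
open Classical

variable {D H : Type}

/-- under assumption (★), if `(R, μ)` satisfies the pre-processing
conditions, `σ` is stable, `h ∉ S` and `σ(h) = (d, h)`, then every edge
`(d, h') ∈ Ch_d(E \ R)` satisfies `h' ∉ S` (i.e. `d ∈ D⁺`). -/
theorem matched_outside_S_doctor_in_Dplus {D H : Type} [Fintype D] [Fintype H]
    (I : SSMC D H) (hstar : I.starAssumption)
    (R μ : Set (D × H)) (hpre : I.preproc R μ)
    (σ : Set (D × H)) (hσ : I.stable σ)
    (h : H) (hS : h ∉ I.S) (d : D) (hm : (d, h) ∈ σ) :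
    ∀ h' : H, (d, h') ∈ I.ChD (I.E \ R) → h' ∉ I.S := by
  intro h' hch hS'
  obtain ⟨hRE, hμmatch, hR1, _⟩ := hpre
  have hdhE : (d, h) ∈ I.E := hσ.1.1 hm
  have hdhR : (d, h) ∉ R := fun hr => hR1 σ hσ _ hr hm
  obtain ⟨⟨hE', _⟩, hbest⟩ := hch
  have hpref := hbest (d, h) ⟨hdhE, hdhR⟩ rfl
  have hstrict := hstar d h' h hE' hdhE hS' hS
  exact hstrict.2 hpref
end

section
/- In the bounded-degree setting, for every connected component X of G* = (D, H; L) with |X| ≥ 2 (i.e., every X ∈ C), we have |D_X| ≤ |H_X|. -/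
open Classical

variable {D H : Type}

/-- Adjacency relation on `D ⊕ H` induced by an edge set `L`. -/
def adjRel (L : Set (D × H)) : (D ⊕ H) → (D ⊕ H) → Prop
  | Sum.inl d, Sum.inr h => (d, h) ∈ L
  | Sum.inr h, Sum.inl d => (d, h) ∈ L
  | _, _ => False

/-- `X` is a connected component of the bipartite graph `(D, H; L)`. -/
def isComponent (L : Set (D × H)) (X : Set (D ⊕ H)) : Prop :=
  ∃ v ∈ X, X = {w | Relation.ReflTransGen (adjRel L) v w}

/-- `D_X`: the doctors in `X`. -/
def Dside (X : Set (D ⊕ H)) : Set D := {d | Sum.inl d ∈ X}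

/-- `H_X`: the hospitals in `X`. -/
def Hside (X : Set (D ⊕ H)) : Set H := {h | Sum.inr h ∈ X}

namespace SSMC

variable (I : SSMC D H)

/-- `Leaf_L(D_X)`: the doctors of `X` incident to exactly one edge of `L = Ch(E \ R)`. -/
def leafSet (R : Set (D × H)) (X : Set (D ⊕ H)) : Set D :=
  {d ∈ Dside X | (edgesD (I.Lset R) d).ncard = 1}

/-- `X ∈ 𝓒`: connected component of `G* = (D, H; Ch(E \ R))` with at least two vertices. -/
def memC (R : Set (D × H)) (X : Set (D ⊕ H)) : Prop :=
  isComponent (I.Lset R) X ∧ 2 ≤ X.ncard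

/-- `X ∈ 𝓟`. -/
def memP (R : Set (D × H)) (X : Set (D ⊕ H)) : Prop :=
  I.memC R X ∧ (Dside X).ncard = (Hside X).ncard

/-- `X ∈ 𝓠`. -/
def memQ (R : Set (D × H)) (X : Set (D ⊕ H)) : Prop :=
  I.memC R X ∧ (Dside X).ncard < (Hside X).ncard

/-- `X ∈ 𝓟*`. -/
def memPstar (R : Set (D × H)) (X : Set (D ⊕ H)) : Prop :=
  I.memP R X ∧ (I.leafSet R X).ncard = 1

/-- `X ∈ 𝓡`: a component consisting of a single hospital `h ∈ H \ S` with `R(h) ≠ ∅`. -/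
def memRcal (R : Set (D × H)) (X : Set (D ⊕ H)) : Prop :=
  isComponent (I.Lset R) X ∧
    ∃ h : H, X = {Sum.inr h} ∧ h ∉ I.S ∧ ∃ e ∈ R, e.2 = h

end SSMC

/-- in the bounded-degree setting, every connected component `X`
of `G* = (D, H; L)` with at least two vertices satisfies `|D_X| ≤ |H_X|`. -/
theorem component_doctors_le_hospitals {D H : Type} [Fintype D] [Fintype H]
    (I : SSMC D H) (hdeg : ∀ d : D, (edgesD I.E d).ncard ≤ 2)
    (R μ : Set (D × H)) (hpre : I.preproc R μ)
    (X : Set (D ⊕ H)) (hX : isComponent (I.Lset R) X) (h2 : 2 ≤ X.ncard) :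
    (Dside X).ncard ≤ (Hside X).ncard := by
  classical
  obtain ⟨hRsub, hmatch, hR1, hR2, hR3, hR4, hR5⟩ := hpre
  obtain ⟨v, hv, hXeq⟩ := hX
  set L := I.Lset R with hLdef
  have hclose : ∀ w ∈ X, ∀ u, adjRel L w u → u ∈ X := by
    intro w hw u hadj
    rw [hXeq] at hw ⊢
    exact Relation.ReflTransGen.tail hw hadj
  have hLsub : L ⊆ I.E \ R := fun e he => he.1.1
  have hedge : ∀ d, Sum.inl d ∈ X → ∃ h, (d, h) ∈ L := by
    intro d hd
    rw [hXeq] at hd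
    rcases hd.cases_tail with heq | ⟨c, _, hc⟩
    · have hex : ∃ w ∈ X, w ≠ v := by
        by_contra hcon
        push_neg at hcon
        have hsub : X ⊆ {v} := fun w hw => hcon w hw
        have := Set.ncard_le_ncard hsub (Set.finite_singleton v)
        rw [Set.ncard_singleton] at this
        omega
      obtain ⟨w, hw, hwv⟩ := hex
      rw [hXeq] at hw
      rcases hw.cases_head with h | ⟨c, hc, _⟩
      · exact absurd h.symm hwv
      · rw [← heq] at hc
        cases c with
        | inl d' => exact absurd hc (by simp [adjRel])
        | inr h' => exact ⟨h', hc⟩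
    · cases c with
      | inl d' => exact absurd hc (by simp [adjRel])
      | inr h' => exact ⟨h', hc⟩
  have hmu : ∀ d, Sum.inl d ∈ X → ∃ e ∈ μ, e.1 = d := by
    intro d hd
    obtain ⟨h, hh⟩ := hedge d hd
    exact hR3 d ⟨(d, h), hLsub hh, rfl⟩
  rcases Set.eq_empty_or_nonempty (Dside X) with hDe | ⟨d₀, hd₀⟩
  · simp [hDe]
  · obtain ⟨e₀, he₀, he₀1⟩ := hmu d₀ hd₀
    have : Nonempty H := ⟨e₀.2⟩
    set f : D → H := fun d =>
      if hd : ∃ e ∈ μ, e.1 = d then hd.choose.2 else Classical.arbitrary H with hf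
    have hfval : ∀ d, ∀ hd : ∃ e ∈ μ, e.1 = d, f d = hd.choose.2 := by
      intro d hd
      simp only [hf, dif_pos hd]
    apply Set.ncard_le_ncard_of_injOn f
    · intro d hd
      have hex := hmu d hd
      obtain ⟨heμ, he1⟩ := hex.choose_spec
      have heL : hex.choose ∈ L := hR2 heμ
      have hch : hex.choose = (d, hex.choose.2) := by
        ext
        · exact he1
        · rfl
      have hadj : adjRel L (Sum.inl d) (Sum.inr hex.choose.2) := by
        show (d, hex.choose.2) ∈ L
        rw [← hch]
        exact heL
      have hmem := hclose (Sum.inl d) hd (Sum.inr hex.choose.2) hadj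
      show Sum.inr (f d) ∈ X
      rw [hfval d hex]
      exact hmem
    · intro d1 hd1 d2 hd2 heq
      have hex1 := hmu d1 hd1
      have hex2 := hmu d2 hd2
      obtain ⟨he1μ, he11⟩ := hex1.choose_spec
      obtain ⟨he2μ, he21⟩ := hex2.choose_spec
      rw [hfval d1 hex1, hfval d2 hex2] at heq
      have := hmatch.2.2 _ he1μ _ he2μ heq
      rw [← he11, ← he21, this]
end

section
/- In the bounded-degree setting, for every X ∈ P we have |Leaf_L(D_X)| ≤ 1, where Leaf_L(D_X) = {d ∈ D_X : |L(d)| = 1}. -/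
open Classical

variable {D H : Type}

/-- The simple graph on `D ⊕ H` induced by an edge set `L`. -/
def compGraph (L : Set (D × H)) : SimpleGraph (D ⊕ H) where
  Adj := adjRel L
  symm := by constructor; rintro (d | h) (d' | h') hab <;> simp_all [adjRel]
  loopless := by constructor; rintro (d | h) hab <;> exact hab

lemma exists_adj_dist_lt {V : Type*} (G : SimpleGraph V) {v w : V}
    (hr : G.Reachable v w) (hne : w ≠ v) :
    ∃ u, G.Adj w u ∧ G.dist v u < G.dist v w := by
  obtain ⟨p, hp⟩ := hr.exists_walk_length_eq_dist
  obtain ⟨u, hadj, q, hq⟩ := SimpleGraph.Walk.exists_eq_cons_of_ne hne p.reverse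
  refine ⟨u, hadj, ?_⟩
  have h1 : G.dist v u ≤ q.reverse.length := SimpleGraph.dist_le q.reverse
  have h2 : p.reverse.length = q.length + 1 := by rw [hq]; simp
  rw [SimpleGraph.Walk.length_reverse] at h1 h2
  omega

/-- in the bounded-degree setting, every `X ∈ 𝓟` has at most
one leaf doctor: `|Leaf_L(D_X)| ≤ 1`. -/
theorem memP_leaf_le_one {D H : Type} [Fintype D] [Fintype H]
    (I : SSMC D H) (hdeg : ∀ d : D, (edgesD I.E d).ncard ≤ 2)
    (R μ : Set (D × H)) (hpre : I.preproc R μ)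
    (X : Set (D ⊕ H)) (hX : I.memP R X) :
    (I.leafSet R X).ncard ≤ 1 := by
  classical
  obtain ⟨⟨⟨v, hvX, hXeq⟩, hX2⟩, hDH⟩ := hX
  set L : Set (D × H) := I.Lset R with hLdef
  have hLE : L ⊆ I.E := fun e he => he.1.1.1
  set G : SimpleGraph (D ⊕ H) := compGraph L with hGdef
  have hreach : ∀ w, w ∈ X ↔ G.Reachable v w := by
    intro w
    rw [hXeq]
    exact (SimpleGraph.reachable_iff_reflTransGen (G := compGraph L) v w).symm
  -- the target edge set
  set T : Set (D × H) := {e ∈ L | Sum.inl e.1 ∈ X} with hTdef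
  rcases Set.eq_empty_or_nonempty (X \ {v}) with hemp | ⟨w0, hw0⟩
  · -- impossible: X has at least 2 elements
    exfalso
    have hXsub : X ⊆ {v} := by
      intro w hw
      by_contra hne
      exact (Set.eq_empty_iff_forall_notMem.mp hemp w) ⟨hw, hne⟩
    have := Set.ncard_le_ncard hXsub (Set.finite_singleton v)
    rw [Set.ncard_singleton] at this
    omega
  · -- key существование
    have key : ∀ w ∈ X \ {v}, ∃ e : D × H, e ∈ L ∧
        ((Sum.inl e.1 = w ∧ G.dist v (Sum.inr e.2) < G.dist v w) ∨
         (Sum.inr e.2 = w ∧ G.dist v (Sum.inl e.1) < G.dist v w)) := by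
      rintro w ⟨hwX, hwv⟩
      have hr : G.Reachable v w := (hreach w).1 hwX
      have hne : w ≠ v := hwv
      obtain ⟨u, hadj, hlt⟩ := exists_adj_dist_lt G hr hne
      rcases w with d | h <;> rcases u with d' | h'
      · exact hadj.elim
      · exact ⟨(d, h'), hadj, Or.inl ⟨rfl, hlt⟩⟩
      · exact ⟨(d', h), hadj, Or.inr ⟨rfl, hlt⟩⟩
      · exact hadj.elim
    have hNE : Nonempty (D × H) := ⟨(key w0 hw0).choose⟩
    set f : (D ⊕ H) → D × H := fun w =>
      if hw : ∃ e : D × H, e ∈ L ∧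
        ((Sum.inl e.1 = w ∧ G.dist v (Sum.inr e.2) < G.dist v w) ∨
         (Sum.inr e.2 = w ∧ G.dist v (Sum.inl e.1) < G.dist v w))
      then hw.choose else Classical.arbitrary _ with hfdef
    have hfspec : ∀ w ∈ X \ {v}, (f w) ∈ L ∧
        ((Sum.inl (f w).1 = w ∧ G.dist v (Sum.inr (f w).2) < G.dist v w) ∨
         (Sum.inr (f w).2 = w ∧ G.dist v (Sum.inl (f w).1) < G.dist v w)) := by
      intro w hw
      have hex := key w hw
      rw [hfdef]
      simp only [dif_pos hex]
      exact hex.choose_spec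
    have hmaps : ∀ w ∈ X \ {v}, f w ∈ T := by
      intro w hw
      obtain ⟨heL, hcase⟩ := hfspec w hw
      refine ⟨heL, ?_⟩
      rcases hcase with ⟨heq, -⟩ | ⟨heq, -⟩
      · rw [heq]; exact hw.1
      · -- Sum.inl (f w).1 is adjacent to w ∈ X
        have hadj : G.Adj (Sum.inr (f w).2) (Sum.inl (f w).1) :=
          G.adj_symm (show ((f w).1, (f w).2) ∈ L by simpa using heL)
        rw [heq] at hadj
        have : G.Reachable v (Sum.inl (f w).1) :=
          ((hreach w).1 hw.1).trans (SimpleGraph.Adj.reachable hadj)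
        exact (hreach _).2 this
    have hinj : Set.InjOn f (X \ {v}) := by
      intro w1 h1 w2 h2 heq
      obtain ⟨-, hc1⟩ := hfspec w1 h1
      obtain ⟨-, hc2⟩ := hfspec w2 h2
      rw [heq] at hc1
      rcases hc1 with ⟨e1, d1⟩ | ⟨e1, d1⟩ <;> rcases hc2 with ⟨e2, d2⟩ | ⟨e2, d2⟩
      · exact e1.symm.trans e2
      · rw [e2] at d1; rw [e1] at d2; omega
      · rw [e2] at d1; rw [e1] at d2; omega
      · exact e1.symm.trans e2
    have hcard1 : X.ncard ≤ T.ncard + 1 := by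
      have h1 : (X \ {v}).ncard ≤ T.ncard :=
        Set.ncard_le_ncard_of_injOn f hmaps hinj (Set.toFinite T)
      have h2 : (X \ {v}).ncard + 1 = X.ncard :=
        Set.ncard_diff_singleton_add_one hvX (Set.toFinite X)
      omega
    -- Finset versions
    set DXf : Finset D := (Set.toFinite (Dside X)).toFinset with hDXf
    set leaff : Finset D := (Set.toFinite (I.leafSet R X)).toFinset with hleaff
    have hleafsub : leaff ⊆ DXf := by
      intro d hd
      rw [hleaff, Set.Finite.mem_toFinset] at hd
      rw [hDXf, Set.Finite.mem_toFinset]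
      exact hd.1
    -- T.ncard ≤ sum of degrees
    have hTsum : T.ncard ≤ ∑ d ∈ DXf, (edgesD L d).ncard := by
      have hTsub : (Set.toFinite T).toFinset ⊆
          DXf.biUnion (fun d => (Set.toFinite (edgesD L d)).toFinset) := by
        intro e he
        rw [Set.Finite.mem_toFinset] at he
        rw [Finset.mem_biUnion]
        exact ⟨e.1, by rw [hDXf, Set.Finite.mem_toFinset]; exact he.2,
          by rw [Set.Finite.mem_toFinset]; exact ⟨he.1, rfl⟩⟩
      calc T.ncard = (Set.toFinite T).toFinset.card := Set.ncard_eq_toFinset_card T _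
        _ ≤ (DXf.biUnion (fun d => (Set.toFinite (edgesD L d)).toFinset)).card :=
            Finset.card_le_card hTsub
        _ ≤ ∑ d ∈ DXf, (Set.toFinite (edgesD L d)).toFinset.card :=
            Finset.card_biUnion_le
        _ = ∑ d ∈ DXf, (edgesD L d).ncard := by
            refine Finset.sum_congr rfl fun d _ => ?_
            exact (Set.ncard_eq_toFinset_card _ _).symm
    -- degree bound
    have hdegsum : ∑ d ∈ DXf, (edgesD L d).ncard + leaff.card ≤ 2 * DXf.card := by
      have hbd : ∀ d ∈ DXf,
          (edgesD L d).ncard + (if d ∈ leaff then 1 else 0) ≤ 2 := by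
        intro d _
        by_cases hdl : d ∈ leaff
        · have hdl' := hdl
          rw [hleaff, Set.Finite.mem_toFinset] at hdl'
          have h1 : (edgesD L d).ncard = 1 := hdl'.2
          rw [h1, if_pos hdl]
        · have hsub : edgesD L d ⊆ edgesD I.E d := fun e he => ⟨hLE he.1, he.2⟩
          have h1 := Set.ncard_le_ncard hsub (Set.toFinite _)
          have h2 := hdeg d
          rw [if_neg hdl]
          omega
      have hsum := Finset.sum_le_sum hbd
      rw [Finset.sum_add_distrib] at hsum
      have hind : ∑ d ∈ DXf, (if d ∈ leaff then 1 else 0) = leaff.card := by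
        rw [← Finset.sum_filter]
        simp only [Finset.sum_const, smul_eq_mul, mul_one]
        rw [Finset.filter_mem_eq_inter, Finset.inter_eq_right.mpr hleafsub]
      rw [hind] at hsum
      have hconst : ∑ _i ∈ DXf, (2 : ℕ) = 2 * DXf.card := by
        rw [Finset.sum_const, smul_eq_mul, mul_comm]
      omega
    -- X.ncard = 2 * |D_X|
    have hXcard : X.ncard = 2 * DXf.card := by
      have hXeq2 : X = (Sum.inl '' Dside X) ∪ (Sum.inr '' Hside X) := by
        ext w
        rcases w with d | h <;> simp [Dside, Hside]
      have hdisj : Disjoint (Sum.inl '' Dside X : Set (D ⊕ H)) (Sum.inr '' Hside X) := by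
        rw [Set.disjoint_left]
        rintro w ⟨d, -, rfl⟩ ⟨h, -, hcon⟩
        cases hcon
      rw [hXeq2, Set.ncard_union_eq hdisj (Set.toFinite _) (Set.toFinite _),
        Set.ncard_image_of_injective _ Sum.inl_injective,
        Set.ncard_image_of_injective _ Sum.inr_injective, ← hDH]
      have : (Dside X).ncard = DXf.card := Set.ncard_eq_toFinset_card _ _
      omega
    have hleafcard : (I.leafSet R X).ncard = leaff.card :=
      Set.ncard_eq_toFinset_card _ _
    omega
end

section
/- In the bounded-degree setting, for every X ∈ Q the following hold: (i) |L(d)| = 2 for every doctor d ∈ D_X, and (ii) |H_X| = |D_X| + 1. -/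
open Classical

variable {D H : Type}

/-- The simple graph on `D ⊕ H` with adjacency `adjRel L`. -/
def graphOf (L : Set (D × H)) : SimpleGraph (D ⊕ H) where
  Adj := adjRel L
  symm := ⟨by rintro (d | h) (d' | h') hadj <;> simp_all [adjRel]⟩
  loopless := ⟨by rintro (d | h) hadj <;> simp_all [adjRel]⟩

lemma graphOf_adj {L : Set (D × H)} {a b : D ⊕ H} :
    (graphOf L).Adj a b ↔ adjRel L a b := Iff.rfl

/-- In a graph, any vertex at positive distance from `v` has a neighbour
strictly closer to `v`. -/
lemma exists_parent {V : Type} {G : SimpleGraph V} {v w : V}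
    (hr : G.Reachable v w) (hne : w ≠ v) :
    ∃ u, G.Adj u w ∧ G.dist v u < G.dist v w := by
  obtain ⟨p, hp⟩ := hr.symm.exists_walk_length_eq_dist
  cases p with
  | nil => exact absurd rfl hne
  | @cons _ u _ ha q =>
    refine ⟨u, ha.symm, ?_⟩
    have h1 : G.dist v u ≤ q.length := by
      rw [SimpleGraph.dist_comm]; exact SimpleGraph.dist_le q
    have h2 : G.dist v w = q.length + 1 := by
      rw [SimpleGraph.dist_comm, ← hp, SimpleGraph.Walk.length_cons]
    omega

/-- Helper turning a pair of (adjacent) vertices of `D ⊕ H` into an edge. -/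
def pairOf (j : D × H) : (D ⊕ H) → (D ⊕ H) → D × H
  | Sum.inl d, Sum.inr h => (d, h)
  | Sum.inr h, Sum.inl d => (d, h)
  | Sum.inl _, Sum.inl _ => j
  | Sum.inr _, Sum.inr _ => j

@[simp] lemma pairOf_inl_inr (j : D × H) (d : D) (h : H) :
    pairOf j (Sum.inl d) (Sum.inr h) = (d, h) := rfl

@[simp] lemma pairOf_inr_inl (j : D × H) (d : D) (h : H) :
    pairOf j (Sum.inr h) (Sum.inl d) = (d, h) := rfl

/-- in the bounded-degree setting, every `X ∈ 𝓠` satisfies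
(i) `|L(d)| = 2` for every doctor `d ∈ D_X`, and (ii) `|H_X| = |D_X| + 1`. -/
theorem memQ_structure {D H : Type} [Fintype D] [Fintype H]
    (I : SSMC D H) (hdeg : ∀ d : D, (edgesD I.E d).ncard ≤ 2)
    (R μ : Set (D × H)) (hpre : I.preproc R μ)
    (X : Set (D ⊕ H)) (hX : I.memQ R X) :
    (∀ d ∈ Dside X, (edgesD (I.Lset R) d).ncard = 2) ∧
      (Hside X).ncard = (Dside X).ncard + 1 := by
  classical
  obtain ⟨⟨⟨v, hv, hXeq⟩, hcard2⟩, hlt⟩ := hX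
  set L : Set (D × H) := I.Lset R with hLdef
  -- `L ⊆ E`, hence every doctor has at most two `L`-edges
  have hLsub : L ⊆ I.E := fun e he => he.1.1.1
  have hub : ∀ d : D, (edgesD L d).ncard ≤ 2 := by
    intro d
    refine le_trans (Set.ncard_le_ncard ?_ (Set.toFinite _)) (hdeg d)
    exact fun e he => ⟨hLsub he.1, he.2⟩
  -- membership in `X` is reachability from `v` in `graphOf L`
  have hXmem : ∀ w, w ∈ X ↔ (graphOf L).Reachable v w := by
    intro w
    rw [hXeq, SimpleGraph.reachable_iff_reflTransGen]
    rfl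
  have hclose : ∀ w ∈ X, ∀ u, (graphOf L).Adj w u → u ∈ X := by
    intro w hw u hadj
    rw [hXmem] at hw ⊢
    exact hw.trans ⟨hadj.toWalk⟩
  -- a junk edge, and nonemptiness facts
  have hwit : ∃ w ∈ X, w ≠ v := by
    obtain ⟨a, ha, b, hb, hab⟩ := (Set.one_lt_ncard (Set.toFinite X)).mp hcard2
    rcases eq_or_ne a v with rfl | hav
    · exact ⟨b, hb, fun hbv => hab hbv.symm⟩
    · exact ⟨a, ha, hav⟩
  -- every non-root vertex of `X` has a parent: an adjacent vertex in `X`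
  -- strictly closer to `v`
  have hpar0 : ∀ w, w ∈ X \ {v} → ∃ u, (graphOf L).Adj u w ∧ u ∈ X ∧
      (graphOf L).dist v u < (graphOf L).dist v w := by
    intro w hw
    obtain ⟨u, hadj, hd⟩ := exists_parent ((hXmem w).mp hw.1) hw.2
    exact ⟨u, hadj, hclose w hw.1 u hadj.symm, hd⟩
  choose! par hadj hmem hdist using hpar0
  -- a junk edge exists
  have hjunk : ∃ j : D × H, j ∈ L := by
    obtain ⟨w, hwX, hwv⟩ := hwit
    have hadjw := hadj w ⟨hwX, hwv⟩
    rcases hpw : par w with d2 | h2 <;> rw [hpw] at hadjw <;>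
      rcases w with d | h <;> simp only [graphOf_adj, adjRel] at hadjw
    · exact ⟨_, hadjw⟩
    · exact ⟨_, hadjw⟩
  obtain ⟨j, hjL⟩ := hjunk
  -- the edges of `L` inside the component `X`
  set LX : Set (D × H) := {e ∈ L | Sum.inl e.1 ∈ X} with hLXdef
  set Φ : (D ⊕ H) → D × H := fun w => pairOf j w (par w) with hΦdef
  -- representation of `Φ` on `X \ {v}`
  have hrep : ∀ w ∈ X \ {v},
      (∃ d h, w = Sum.inl d ∧ par w = Sum.inr h ∧ (d, h) ∈ L ∧ Φ w = (d, h) ∧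
        Sum.inl d ∈ X) ∨
      (∃ d h, w = Sum.inr h ∧ par w = Sum.inl d ∧ (d, h) ∈ L ∧ Φ w = (d, h) ∧
        Sum.inl d ∈ X) := by
    intro w hw
    have hadjw := hadj w hw
    have hmemw := hmem w hw
    rcases hpw : par w with d2 | h2 <;> rw [hpw] at hadjw hmemw <;>
      rcases w with d | h <;> simp only [graphOf_adj, adjRel] at hadjw
    · exact Or.inr ⟨d2, h, rfl, rfl, hadjw, by simp [hΦdef, hpw], hmemw⟩
    · exact Or.inl ⟨d, h2, rfl, rfl, hadjw, by simp [hΦdef, hpw], hw.1⟩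
  have himg : ∀ w ∈ X \ {v}, Φ w ∈ LX := by
    intro w hw
    rcases hrep w hw with ⟨d, h, _, _, hL, hΦ, hdX⟩ | ⟨d, h, _, _, hL, hΦ, hdX⟩ <;>
      · rw [hΦ]; exact ⟨hL, hdX⟩
  have hinj : Set.InjOn Φ (X \ {v}) := by
    intro w hw w' hw' heq
    rcases hrep w hw with ⟨d, h, hwe, hpw, _, hΦ, _⟩ | ⟨d, h, hwe, hpw, _, hΦ, _⟩ <;>
      rcases hrep w' hw' with ⟨d', h', hwe', hpw', _, hΦ', _⟩ |
        ⟨d', h', hwe', hpw', _, hΦ', _⟩ <;>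
      rw [hΦ, hΦ', Prod.mk.injEq] at heq <;> obtain ⟨hdd, hhh⟩ := heq
    · rw [hwe, hwe', hdd]
    · -- w = inl d, w' = inr h' : parents point at each other
      exfalso
      have h1 := hdist w hw
      have h2 := hdist w' hw'
      rw [hpw, hwe] at h1
      rw [hpw', hwe'] at h2
      rw [← hdd, ← hhh] at h2
      omega
    · exfalso
      have h1 := hdist w hw
      have h2 := hdist w' hw'
      rw [hpw, hwe] at h1
      rw [hpw', hwe'] at h2
      rw [← hdd, ← hhh] at h2
      omega
    · rw [hwe, hwe', hhh]
  -- counting: `|X| - 1 ≤ |LX|`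
  have hXstep : (X \ {v}).ncard + 1 = X.ncard :=
    Set.ncard_diff_singleton_add_one hv (Set.toFinite X)
  have hle1 : (X \ {v}).ncard ≤ LX.ncard := by
    rw [← Set.ncard_image_of_injOn hinj]
    exact Set.ncard_le_ncard (fun e ⟨w, hw, hwe⟩ => hwe ▸ himg w hw) (Set.toFinite _)
  -- `|X| = |D_X| + |H_X|`
  have hXsplit : X.ncard = (Dside X).ncard + (Hside X).ncard := by
    have hXeq2 : X = (Sum.inl '' Dside X) ∪ (Sum.inr '' Hside X) := by
      ext (d | h) <;> simp [Dside, Hside]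
    conv_lhs => rw [hXeq2]
    rw [Set.ncard_union_eq ?_ (Set.toFinite _) (Set.toFinite _),
      Set.ncard_image_of_injective _ Sum.inl_injective,
      Set.ncard_image_of_injective _ Sum.inr_injective]
    rw [Set.disjoint_left]
    rintro a ⟨d, _, rfl⟩ ⟨h, _, hcon⟩
    cases hcon
  -- `|LX| = ∑_{d ∈ D_X} |L(d)|`
  have hfiber : ∀ d ∈ (Dside X).toFinset,
      (LX.toFinset.filter (fun e => e.1 = d)) = (edgesD L d).toFinset := by
    intro d hd
    rw [Set.mem_toFinset] at hd
    ext e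
    simp only [Finset.mem_filter, Set.mem_toFinset, hLXdef, Set.mem_setOf_eq]
    simp only [edgesD, Set.mem_setOf_eq]
    constructor
    · rintro ⟨⟨heL, _⟩, he1⟩; exact ⟨heL, he1⟩
    · rintro ⟨heL, he1⟩; exact ⟨⟨heL, by rw [he1]; exact hd⟩, he1⟩
  have hsum : LX.ncard = ∑ d ∈ (Dside X).toFinset, (edgesD L d).ncard := by
    rw [Set.ncard_eq_toFinset_card' LX]
    rw [Finset.card_eq_sum_card_fiberwise (f := Prod.fst)
      (t := (Dside X).toFinset) (fun e he => by
        rw [Finset.mem_coe, Set.mem_toFinset] at he ⊢; exact he.2)]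
    exact Finset.sum_congr rfl fun d hd => by
      rw [hfiber d hd, Set.ncard_eq_toFinset_card']
  have hDcard : (Dside X).toFinset.card = (Dside X).ncard :=
    (Set.ncard_eq_toFinset_card' _).symm
  have hsumle : ∑ d ∈ (Dside X).toFinset, (edgesD L d).ncard ≤
      2 * (Dside X).ncard := by
    calc ∑ d ∈ (Dside X).toFinset, (edgesD L d).ncard
        ≤ ∑ _d ∈ (Dside X).toFinset, 2 :=
          Finset.sum_le_sum fun d _ => hub d
      _ = 2 * (Dside X).ncard := by rw [Finset.sum_const, hDcard]; ring
  -- put the inequalities together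
  have hmain : (Dside X).ncard + (Hside X).ncard ≤
      (∑ d ∈ (Dside X).toFinset, (edgesD L d).ncard) + 1 := by
    rw [← hXsplit, ← hXstep, ← hsum]
    omega
  have hHcard : (Hside X).ncard = (Dside X).ncard + 1 := by omega
  refine ⟨?_, hHcard⟩
  intro d hdX
  by_contra hne2
  have hdlt : (edgesD L d).ncard < 2 := lt_of_le_of_ne (hub d) hne2
  have hstrict : ∑ d ∈ (Dside X).toFinset, (edgesD L d).ncard <
      ∑ _d ∈ (Dside X).toFinset, 2 := by
    refine Finset.sum_lt_sum (fun d _ => hub d) ⟨d, ?_, hdlt⟩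
    rw [Set.mem_toFinset]; exact hdX
  rw [Finset.sum_const, hDcard, smul_eq_mul] at hstrict
  omega
end

section
/- In the bounded-degree setting, for every X ∈ Q and every hospital h ∈ H_X, there exists a matching ξ in G such that ξ ⊆ L(D_X) (the edges of L incident to doctors of D_X), ξ(h) = ∅, and ξ(d) ≠ ∅ for every doctor d ∈ D_X. -/
open Classical

variable {D H : Type}

section GraphAux

/-- `n`-step walks of a relation. -/
def stepN {V : Type} (A : V → V → Prop) : ℕ → V → V → Prop
  | 0, v, w => v = w
  | n+1, v, w => ∃ u, stepN A n v u ∧ A u w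

theorem reflTransGen_iff_stepN {V : Type} (A : V → V → Prop) (v w : V) :
    Relation.ReflTransGen A v w ↔ ∃ n, stepN A n v w := by
  constructor
  · intro hrel
    induction hrel with
    | refl => exact ⟨0, rfl⟩
    | tail _ hbc ih => obtain ⟨n, hn⟩ := ih; exact ⟨n+1, _, hn, hbc⟩
  · rintro ⟨n, hn⟩
    induction n generalizing w with
    | zero => cases hn; exact .refl
    | succ n ih => obtain ⟨u, hu, hA⟩ := hn; exact (ih u hu).tail hA

/-- Distance from `r` to `w` along `A` (junk value if unreachable). -/
noncomputable def gdist {V : Type} (A : V → V → Prop) (r w : V) : ℕ :=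
  sInf {n | stepN A n r w}

theorem gdist_self {V : Type} (A : V → V → Prop) (r : V) : gdist A r r = 0 :=
  Nat.sInf_eq_zero.mpr (Or.inl rfl)

theorem stepN_gdist {V : Type} {A : V → V → Prop} {r w : V} (hw : ∃ n, stepN A n r w) :
    stepN A (gdist A r w) r w := Nat.sInf_mem hw

theorem gdist_le {V : Type} {A : V → V → Prop} {r w : V} {n : ℕ} (hn : stepN A n r w) :
    gdist A r w ≤ n := Nat.sInf_le hn

theorem gdist_adj_le {V : Type} {A : V → V → Prop} {r u w : V} (hu : ∃ n, stepN A n r u)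
    (hA : A u w) : gdist A r w ≤ gdist A r u + 1 :=
  gdist_le ⟨u, stepN_gdist hu, hA⟩

theorem gdist_eq_zero {V : Type} {A : V → V → Prop} {r w : V} (hw : ∃ n, stepN A n r w)
    (h0 : gdist A r w = 0) : r = w := by
  have hs := stepN_gdist hw
  rw [h0] at hs
  exact hs

theorem exists_parent_s12 {V : Type} {A : V → V → Prop} {r w : V} (hw : ∃ n, stepN A n r w)
    (h0 : gdist A r w ≠ 0) :
    ∃ u, A u w ∧ (∃ n, stepN A n r u) ∧ gdist A r u + 1 = gdist A r w := by
  obtain ⟨m, hm⟩ := Nat.exists_eq_succ_of_ne_zero h0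
  have hs := stepN_gdist hw
  rw [hm] at hs
  obtain ⟨u, hu, hA⟩ := hs
  have h1 : gdist A r u ≤ m := gdist_le hu
  have h2 : gdist A r w ≤ gdist A r u + 1 := gdist_adj_le ⟨m, hu⟩ hA
  exact ⟨u, hA, ⟨m, hu⟩, by omega⟩

theorem adjRel_symm' {D H : Type} {L : Set (D × H)} {u w : D ⊕ H} (h : adjRel L u w) :
    adjRel L w u := by
  cases u <;> cases w <;> simp_all [adjRel]

theorem adjRel_isLeft {D H : Type} {L : Set (D × H)} {u w : D ⊕ H} (h : adjRel L u w) :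
    u.isLeft = !w.isLeft := by
  cases u <;> cases w <;> simp_all [adjRel]

theorem adjRel_of_mem {D H : Type} {L : Set (D × H)} {e : D × H} (he : e ∈ L) :
    adjRel L (Sum.inl e.1) (Sum.inr e.2) := by
  show (e.1, e.2) ∈ L
  rwa [Prod.mk.eta]

theorem stepN_parity {D H : Type} {L : Set (D × H)} (h0 : H) :
    ∀ (n : ℕ) (w : D ⊕ H), stepN (adjRel L) n (Sum.inr h0) w → (w.isLeft = true ↔ Odd n) := by
  intro n
  induction n with
  | zero =>
    intro w hw
    cases hw
    simp [Nat.odd_iff]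
  | succ n ih =>
    intro w hw
    obtain ⟨u, hu, hA⟩ := hw
    have hiff := ih u hu
    have hflip := adjRel_isLeft hA
    rw [Nat.odd_add_one, ← hiff, hflip]
    cases w.isLeft <;> simp

end GraphAux

/-- in the bounded-degree setting, for every `X ∈ 𝓠` and every
hospital `h ∈ H_X` there is a matching `ξ ⊆ L(D_X)` leaving `h` unmatched and
matching every doctor of `D_X`. -/
theorem memQ_matching_avoiding_hospital {D H : Type} [Fintype D] [Fintype H]
    (I : SSMC D H) (hdeg : ∀ d : D, (edgesD I.E d).ncard ≤ 2)
    (R μ : Set (D × H)) (hpre : I.preproc R μ)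
    (X : Set (D ⊕ H)) (hX : I.memQ R X) (h : H) (hh : h ∈ Hside X) :
    ∃ ξ : Set (D × H), I.isMatching ξ ∧
      ξ ⊆ {e ∈ I.Lset R | e.1 ∈ Dside X} ∧
      (∀ e ∈ ξ, e.2 ≠ h) ∧
      (∀ d ∈ Dside X, ∃ e ∈ ξ, e.1 = d) := by
  classical
  obtain ⟨⟨⟨v, hv, hXv⟩, hX2⟩, hlt⟩ := hX
  set L : Set (D × H) := I.Lset R with hLdef
  have hLE : L ⊆ I.E := by
    intro e he
    have he' : e ∈ I.E \ R := he.1.1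
    exact he'.1
  set A : (D ⊕ H) → (D ⊕ H) → Prop := adjRel L with hAdef
  have hsymm : Symmetric A := fun u w hx => adjRel_symm' hx
  set r : D ⊕ H := Sum.inr h with hrdef
  have hrX : r ∈ X := hh
  have hreach : ∀ w ∈ X, ∃ n, stepN A n r w := by
    intro w hw
    rw [hXv] at hw
    have hr' : Relation.ReflTransGen A v r := by rw [hXv] at hrX; exact hrX
    exact (reflTransGen_iff_stepN A r w).1
      ((by haveI : Std.Symm A := ⟨hsymm⟩; exact Relation.ReflTransGen.symmetric.symm _ _ hr' : Relation.ReflTransGen A r v).trans hw)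
  have hclosed : ∀ w ∈ X, ∀ u, A w u → u ∈ X := by
    intro w hw u hAu
    rw [hXv] at hw ⊢
    exact hw.tail hAu
  set dst : (D ⊕ H) → ℕ := gdist A r with hdstdef
  have hmem : ∀ w, (∃ n, stepN A n r w) → w ∈ X := by
    intro w hw
    rw [hXv]
    have hr' : Relation.ReflTransGen A v r := by rw [hXv] at hrX; exact hrX
    exact hr'.trans ((reflTransGen_iff_stepN A r w).2 hw)
  have hparity : ∀ w ∈ X, (w.isLeft = true ↔ Odd (dst w)) := by
    intro w hw
    exact stepN_parity h _ w (stepN_gdist (hreach w hw))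
  set LX : Set (D × H) := {e ∈ L | Sum.inl e.1 ∈ X} with hLXdef
  set P : (D ⊕ H) → (D × H) → Prop := fun w e =>
    e ∈ LX ∧ ((w = Sum.inl e.1 ∧ dst (Sum.inr e.2) + 1 = dst w) ∨
              (w = Sum.inr e.2 ∧ dst (Sum.inl e.1) + 1 = dst w)) with hPdef
  have hPex : ∀ w ∈ X \ {r}, ∃ e, P w e := by
    rintro w ⟨hwX, hwr⟩
    have h0 : dst w ≠ 0 := by
      intro h0
      exact hwr (Set.mem_singleton_iff.mpr (gdist_eq_zero (hreach w hwX) h0).symm)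
    obtain ⟨u, hAuw, hur, hdu⟩ := exists_parent_s12 (hreach w hwX) h0
    have huX : u ∈ X := hmem u hur
    cases u with
    | inl d =>
      cases w with
      | inl d' => exact absurd hAuw (by simp [hAdef, adjRel])
      | inr h' => exact ⟨(d, h'), ⟨hAuw, huX⟩, Or.inr ⟨rfl, hdu⟩⟩
    | inr h' =>
      cases w with
      | inl d' => exact ⟨(d', h'), ⟨hAuw, hwX⟩, Or.inl ⟨rfl, hdu⟩⟩
      | inr h'' => exact absurd hAuw (by simp [hAdef, adjRel])
  obtain ⟨w0, hw0X, hw0r⟩ := Set.exists_ne_of_one_lt_ncard (by omega : 1 < X.ncard) r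
  obtain ⟨e0, -⟩ := hPex w0 ⟨hw0X, hw0r⟩
  have hnE : Nonempty (D × H) := ⟨e0⟩
  set par : (D ⊕ H) → (D × H) :=
    fun w => if hw : ∃ e, P w e then hw.choose else Classical.choice hnE with hpardef
  have hparP : ∀ w ∈ X \ {r}, P w (par w) := by
    intro w hw
    have hex := hPex w hw
    simp only [hpardef, dif_pos hex]
    exact hex.choose_spec
  have hparInj : Set.InjOn par (X \ {r}) := by
    intro w1 hw1 w2 hw2 heq
    have h1 := hparP w1 hw1
    have h2 := hparP w2 hw2
    rw [← heq] at h2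
    rcases h1.2 with ⟨hw1e, hd1⟩ | ⟨hw1e, hd1⟩ <;>
      rcases h2.2 with ⟨hw2e, hd2⟩ | ⟨hw2e, hd2⟩
    · rw [hw1e, hw2e]
    · exfalso; rw [← hw1e] at hd2; rw [← hw2e] at hd1; omega
    · exfalso; rw [← hw1e] at hd2; rw [← hw2e] at hd1; omega
    · rw [hw1e, hw2e]
  have hfinX : X.Finite := Set.toFinite X
  have hfinLX : LX.Finite := Set.toFinite LX
  have hfinD : (Dside X).Finite := Set.toFinite _
  have hXsplit : X = (Sum.inl '' Dside X) ∪ (Sum.inr '' Hside X) := by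
    ext w
    cases w with
    | inl d => simp [Dside]
    | inr h' => simp [Hside]
  have hncX : X.ncard = (Dside X).ncard + (Hside X).ncard := by
    conv_lhs => rw [hXsplit]
    rw [ Set.ncard_union_eq ?disj (Set.toFinite _) (Set.toFinite _),
      Set.ncard_image_of_injective _ Sum.inl_injective,
      Set.ncard_image_of_injective _ Sum.inr_injective]
    case disj =>
      rw [Set.disjoint_left]
      rintro _ ⟨d, -, rfl⟩ ⟨h', -, hcon⟩
      exact Sum.inl_ne_inr hcon.symm
  have hdegL : ∀ d : D, (edgesD L d).ncard ≤ 2 := by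
    intro d
    refine le_trans (Set.ncard_le_ncard ?_ (Set.toFinite _)) (hdeg d)
    exact fun e he => ⟨hLE he.1, he.2⟩
  set DF : Finset D := hfinD.toFinset with hDFdef
  have hDFcard : DF.card = (Dside X).ncard := (Set.ncard_eq_toFinset_card _ hfinD).symm
  have hLXsub : hfinLX.toFinset ⊆ DF.biUnion (fun d => (Set.toFinite (edgesD L d)).toFinset) := by
    intro e he
    rw [Set.Finite.mem_toFinset] at he
    rw [Finset.mem_biUnion]
    refine ⟨e.1, ?_, ?_⟩
    · rw [hDFdef, Set.Finite.mem_toFinset]; exact he.2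
    · rw [Set.Finite.mem_toFinset]; exact ⟨he.1, rfl⟩
  have hcard1 : LX.ncard ≤ 2 * (Dside X).ncard := by
    calc LX.ncard = hfinLX.toFinset.card := Set.ncard_eq_toFinset_card _ hfinLX
      _ ≤ (DF.biUnion (fun d => (Set.toFinite (edgesD L d)).toFinset)).card :=
        Finset.card_le_card hLXsub
      _ ≤ ∑ d ∈ DF, ((Set.toFinite (edgesD L d)).toFinset).card := Finset.card_biUnion_le
      _ ≤ ∑ _d ∈ DF, 2 := by
        refine Finset.sum_le_sum fun d _ => ?_
        rw [← Set.ncard_eq_toFinset_card _ (Set.toFinite (edgesD L d))]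
        exact hdegL d
      _ = 2 * (Dside X).ncard := by
        rw [Finset.sum_const, smul_eq_mul, hDFcard, Nat.mul_comm]
  have hcard2 : (X \ {r}).ncard ≤ LX.ncard :=
    Set.ncard_le_ncard_of_injOn par (fun w hw => (hparP w hw).1) hparInj hfinLX
  have hXrcard : (X \ {r}).ncard = X.ncard - 1 := Set.ncard_diff_singleton_of_mem hrX
  have himage : par '' (X \ {r}) = LX := by
    refine Set.eq_of_subset_of_ncard_le ?_ ?_ hfinLX
    · rintro _ ⟨w, hw, rfl⟩
      exact (hparP w hw).1
    · rw [Set.ncard_image_of_injOn hparInj, hXrcard]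
      omega
  have hdeg2 : ∀ d ∈ Dside X, (edgesD L d).ncard = 2 := by
    by_contra hcon
    push_neg at hcon
    obtain ⟨d0, hd0, hne2⟩ := hcon
    have hlt2 : (edgesD L d0).ncard < 2 := lt_of_le_of_ne (hdegL d0) hne2
    have hbig : LX.ncard < 2 * (Dside X).ncard := by
      calc LX.ncard = hfinLX.toFinset.card := Set.ncard_eq_toFinset_card _ hfinLX
        _ ≤ (DF.biUnion (fun d => (Set.toFinite (edgesD L d)).toFinset)).card :=
          Finset.card_le_card hLXsub
        _ ≤ ∑ d ∈ DF, ((Set.toFinite (edgesD L d)).toFinset).card := Finset.card_biUnion_le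
        _ < ∑ _d ∈ DF, 2 := by
          refine Finset.sum_lt_sum (fun d _ => ?_) ⟨d0, ?_, ?_⟩
          · rw [← Set.ncard_eq_toFinset_card _ (Set.toFinite (edgesD L d))]
            exact hdegL d
          · rw [hDFdef, Set.Finite.mem_toFinset]; exact hd0
          · rw [← Set.ncard_eq_toFinset_card _ (Set.toFinite (edgesD L d0))]
            exact hlt2
        _ = 2 * (Dside X).ncard := by
          rw [Finset.sum_const, smul_eq_mul, hDFcard, Nat.mul_comm]
    omega
  -- every edge of `LX` whose "far" endpoint is `w` equals `par w`
  have hkey : ∀ w, w ≠ r → ∀ e ∈ LX,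
      ((w = Sum.inl e.1 ∧ dst (Sum.inr e.2) + 1 = dst w) ∨
       (w = Sum.inr e.2 ∧ dst (Sum.inl e.1) + 1 = dst w)) → par w = e := by
    intro w hwr e heLX hcase
    have heim : e ∈ par '' (X \ {r}) := by rw [himage]; exact heLX
    obtain ⟨w', hw', hpw'⟩ := heim
    have hP' := hparP w' hw'
    rw [hpw'] at hP'
    rcases hP'.2 with ⟨hw'e, hd'⟩ | ⟨hw'e, hd'⟩ <;> rcases hcase with ⟨hwe, hd⟩ | ⟨hwe, hd⟩
    · rw [hwe, ← hw'e, hpw']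
    · exfalso; rw [← hw'e] at hd; rw [← hwe] at hd'; omega
    · exfalso; rw [← hw'e] at hd; rw [← hwe] at hd'; omega
    · rw [hwe, ← hw'e, hpw']
  -- uniqueness of parents
  have huniq : ∀ w ∈ X, w ≠ r → ∀ u1 u2, A u1 w → A u2 w →
      dst u1 + 1 = dst w → dst u2 + 1 = dst w → u1 = u2 := by
    intro w hwX hwr u1 u2 hA1 hA2 hd1 hd2
    cases w with
    | inl d =>
      obtain ⟨x1, rfl⟩ : ∃ x, u1 = Sum.inr x := by
        cases u1 with
        | inl y => exact absurd hA1 (by simp [hAdef, adjRel])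
        | inr x => exact ⟨x, rfl⟩
      obtain ⟨x2, rfl⟩ : ∃ x, u2 = Sum.inr x := by
        cases u2 with
        | inl y => exact absurd hA2 (by simp [hAdef, adjRel])
        | inr x => exact ⟨x, rfl⟩
      have he1 : (d, x1) ∈ LX := ⟨hA1, hwX⟩
      have he2 : (d, x2) ∈ LX := ⟨hA2, hwX⟩
      have hp1 := hkey _ hwr (d, x1) he1 (Or.inl ⟨rfl, hd1⟩)
      have hp2 := hkey _ hwr (d, x2) he2 (Or.inl ⟨rfl, hd2⟩)
      rw [hp1] at hp2
      rw [Prod.mk.injEq] at hp2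
      rw [hp2.2]
    | inr h' =>
      obtain ⟨x1, rfl⟩ : ∃ x, u1 = Sum.inl x := by
        cases u1 with
        | inr y => exact absurd hA1 (by simp [hAdef, adjRel])
        | inl x => exact ⟨x, rfl⟩
      obtain ⟨x2, rfl⟩ : ∃ x, u2 = Sum.inl x := by
        cases u2 with
        | inr y => exact absurd hA2 (by simp [hAdef, adjRel])
        | inl x => exact ⟨x, rfl⟩
      have hx1X : (Sum.inl x1 : D ⊕ H) ∈ X := hclosed _ hwX _ (hsymm hA1)
      have he1 : (x1, h') ∈ LX := ⟨hA1, hx1X⟩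
      have hx2X : (Sum.inl x2 : D ⊕ H) ∈ X := hclosed _ hwX _ (hsymm hA2)
      have he2 : (x2, h') ∈ LX := ⟨hA2, hx2X⟩
      have hp1 := hkey _ hwr (x1, h') he1 (Or.inr ⟨rfl, hd1⟩)
      have hp2 := hkey _ hwr (x2, h') he2 (Or.inr ⟨rfl, hd2⟩)
      rw [hp1] at hp2
      rw [Prod.mk.injEq] at hp2
      rw [hp2.1]
  -- construction of the "child" hospital of each doctor
  have hQex : ∀ d ∈ Dside X, ∃ q : H, (d, q) ∈ L ∧ Sum.inr q ∈ X ∧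
      dst (Sum.inr q) = dst (Sum.inl d) + 1 := by
    intro d hd
    have hdX : (Sum.inl d : D ⊕ H) ∈ X := hd
    have hdr : (Sum.inl d : D ⊕ H) ≠ r := by simp [hrdef]
    have h0 : dst (Sum.inl d) ≠ 0 := fun h0 => hdr (gdist_eq_zero (hreach _ hdX) h0).symm
    obtain ⟨u, hAu, hur, hdu⟩ := exists_parent_s12 (hreach _ hdX) h0
    obtain ⟨p, rfl⟩ : ∃ p, u = Sum.inr p := by
      cases u with
      | inl y => exact absurd hAu (by simp [hAdef, adjRel])
      | inr p => exact ⟨p, rfl⟩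
    have hcard := hdeg2 d hd
    have h1lt : 1 < ((Set.toFinite (edgesD L d)).toFinset).card := by
      rw [← Set.ncard_eq_toFinset_card _ (Set.toFinite (edgesD L d)), hcard]
      omega
    obtain ⟨e2, he2, hnee⟩ := Finset.exists_mem_ne h1lt (d, p)
    rw [Set.Finite.mem_toFinset] at he2
    obtain ⟨he2L, he2d⟩ := he2
    have hq : (d, e2.2) ∈ L := by
      rw [← he2d, Prod.mk.eta]
      exact he2L
    have hqp : e2.2 ≠ p := by
      intro hqp
      exact hnee (Prod.ext he2d hqp)
    have hAdq : A (Sum.inl d) (Sum.inr e2.2) := hq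
    have hqX : (Sum.inr e2.2 : D ⊕ H) ∈ X := hclosed _ hdX _ hAdq
    have hub : dst (Sum.inr e2.2) ≤ dst (Sum.inl d) + 1 := gdist_adj_le (hreach _ hdX) hAdq
    have hlb : dst (Sum.inl d) ≤ dst (Sum.inr e2.2) + 1 :=
      gdist_adj_le (hreach _ hqX) (hsymm hAdq)
    have hpard : Odd (dst (Sum.inl d)) := (hparity _ hdX).1 rfl
    have hparq : ¬ Odd (dst (Sum.inr e2.2)) := by
      intro ho
      have := (hparity _ hqX).2 ho
      simp at this
    have hnoteq : dst (Sum.inr e2.2) ≠ dst (Sum.inl d) := by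
      intro hEq
      rw [hEq] at hparq
      exact hparq hpard
    have hnotlt : dst (Sum.inr e2.2) + 1 ≠ dst (Sum.inl d) := by
      intro hEq
      have := huniq _ hdX hdr _ _ (hsymm hAdq) hAu hEq hdu
      rw [Sum.inr.injEq] at this
      exact hqp this
    exact ⟨e2.2, hq, hqX, by omega⟩
  have hQtot : ∀ d : D, ∃ q : H, d ∈ Dside X →
      ((d, q) ∈ L ∧ Sum.inr q ∈ X ∧ dst (Sum.inr q) = dst (Sum.inl d) + 1) := by
    intro d
    by_cases hd : d ∈ Dside X
    · obtain ⟨q, hq⟩ := hQex d hd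
      exact ⟨q, fun _ => hq⟩
    · exact ⟨h, fun hdd => absurd hdd hd⟩
  choose qf hqf using hQtot
  refine ⟨(fun d => (d, qf d)) '' Dside X, ⟨?_, ?_, ?_⟩, ?_, ?_, ?_⟩
  · rintro _ ⟨d, hd, rfl⟩
    exact hLE (hqf d hd).1
  · rintro _ ⟨d1, hd1, rfl⟩ _ ⟨d2, hd2, rfl⟩ heq
    have heq2 : d1 = d2 := heq
    subst heq2
    rfl
  · rintro _ ⟨d1, hd1, rfl⟩ _ ⟨d2, hd2, rfl⟩ heq0
    have heq : qf d1 = qf d2 := heq0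
    have hs1 := hqf d1 hd1
    have hs2 := hqf d2 hd2
    have hwX : (Sum.inr (qf d1) : D ⊕ H) ∈ X := hs1.2.1
    have hwr : (Sum.inr (qf d1) : D ⊕ H) ≠ r := by
      intro hcon
      have h0 : dst (Sum.inr (qf d1)) = 0 := by rw [hcon]; exact gdist_self A r
      rw [hs1.2.2] at h0
      omega
    have hA1' : A (Sum.inl d1) (Sum.inr (qf d1)) := hs1.1
    have hA2' : A (Sum.inl d2) (Sum.inr (qf d1)) := by
      rw [heq]
      exact hs2.1
    have hd2' : dst (Sum.inl d2) + 1 = dst (Sum.inr (qf d1)) := by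
      rw [heq]
      exact hs2.2.2.symm
    have hdd := huniq _ hwX hwr _ _ hA1' hA2' hs1.2.2.symm hd2'
    rw [Sum.inl.injEq] at hdd
    subst hdd
    rfl
  · rintro _ ⟨d, hd, rfl⟩
    exact ⟨(hqf d hd).1, hd⟩
  · rintro _ ⟨d, hd, rfl⟩ hcon
    have hcon2 : qf d = h := hcon
    have hs := hqf d hd
    have h0 : dst (Sum.inr (qf d)) = 0 := by
      rw [hcon2, ← hrdef]
      exact gdist_self A r
    rw [hs.2.2] at h0
    omega
  · intro d hd
    exact ⟨(d, qf d), ⟨d, hd, rfl⟩, rfl⟩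
end
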